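/- arXiv:2312.02089 — 2 statements merged into one kernel-verified Lean document; each statement's English description precedes it below -/
import Mathlib

section
/- Let (X, π) be a weighted n-partite simplicial complex that is a (γ₀,…,γ_{n−2})-local spectral expander. Then π is (ε₀,…,ε_{n−2})-product with ε_i = (n−1−i)·γ_i; that is, for every partial assignment α to a set S of at most n−2 coordinates and all distinct i, j ∈ [n]∖S, σ₂(C_α^{i→j}) ≤ (n−1−|S|)·γ_{|S|}. -/
open Finset
open scoped Classical

noncomputable section

namespace PaperFormal

/-- A weighted `n`-partite simplicial complex: a nonempty finite set `Ω` of `n`-tuples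
(the top faces, each tuple picking one element from each side `U i`) together with a
full-support probability distribution `π` on it. -/
structure WPC (n : ℕ) (U : Fin n → Type*) [∀ i, Fintype (U i)] [∀ i, DecidableEq (U i)] where
  Ω : Finset (∀ i, U i)
  nonempty : Ω.Nonempty
  π : (∀ i, U i) → ℝ
  nonneg : ∀ ω, 0 ≤ π ω
  support : ∀ ω, 0 < π ω ↔ ω ∈ Ω
  sum_one : ∑ ω : ∀ i, U i, π ω = 1

/-- Partial assignments to the coordinates in `S`. -/
abbrev PAssign {n : ℕ} (U : Fin n → Type*) (S : Finset (Fin n)) : Type _ :=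
  ∀ i : {x : Fin n // x ∈ S}, U i.1

variable {n : ℕ} {U : Fin n → Type*} [∀ i, Fintype (U i)] [∀ i, DecidableEq (U i)]

/-- Restriction of a tuple to the coordinates in `S`. -/
def restr (S : Finset (Fin n)) (ω : ∀ i, U i) : PAssign U S := fun i => ω i.1

/-- The unique assignment to the empty set of coordinates. -/
def emptyA : PAssign U (∅ : Finset (Fin n)) := fun i => absurd i.2 (Finset.notMem_empty i.1)

/-- Probability of the event `E` under `π`. -/
def pr (X : WPC n U) (E : (∀ i, U i) → Prop) : ℝ :=
  ∑ ω : ∀ i, U i, if E ω then X.π ω else 0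

lemma pr_congr (X : WPC n U) {E F : (∀ i, U i) → Prop} (h : ∀ ω, E ω ↔ F ω) :
    pr X E = pr X F :=
  Finset.sum_congr rfl fun ω _ => if_congr (h ω) rfl rfl

/-- The `S`-marginal of `π`, evaluated at the partial assignment `α`. -/
def marg (X : WPC n U) (S : Finset (Fin n)) (α : PAssign U S) : ℝ :=
  pr X fun ω => restr S ω = α

/-- The pinned marginal `π_T^{(α)}`: the probability that the coordinates in `T` agree
with `β`, conditioned on the coordinates in `S` agreeing with `α`. -/
def cmarg (X : WPC n U) {S T : Finset (Fin n)} (α : PAssign U S) (β : PAssign U T) : ℝ :=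
  pr X (fun ω => restr S ω = α ∧ restr T ω = β) / marg X S α

/-- The colored random walk `C_α^{I → J}`: entry `(τI, τJ)` is
`Pr[ω_J = τJ | ω_I = τI, ω_S = α]`. -/
def Cwalk (X : WPC n U) (S I J : Finset (Fin n)) (α : PAssign U S)
    (τI : PAssign U I) (τJ : PAssign U J) : ℝ :=
  pr X (fun ω => restr S ω = α ∧ restr I ω = τI ∧ restr J ω = τJ) /
    pr X (fun ω => restr S ω = α ∧ restr I ω = τI)

/-- The second largest singular value of a row-stochastic matrix `M` satisfying
`μA M = μB`, with respect to the inner products weighted by `μA` and `μB`, via its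
variational characterization
`σ₂(M) = sup { ⟨f, M g⟩_{μA} : ⟨f,1⟩_{μA} = ⟨g,1⟩_{μB} = 0, ‖f‖_{μA} = ‖g‖_{μB} = 1 }`. -/
def sigma2 {A B : Type*} [Fintype A] [Fintype B]
    (μA : A → ℝ) (μB : B → ℝ) (M : A → B → ℝ) : ℝ :=
  sSup { r : ℝ | ∃ f : A → ℝ, ∃ g : B → ℝ,
    (∑ a, μA a * f a) = 0 ∧ (∑ b, μB b * g b) = 0 ∧
    (∑ a, μA a * f a ^ 2) = 1 ∧ (∑ b, μB b * g b ^ 2) = 1 ∧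
    r = ∑ a, μA a * f a * ∑ b, M a b * g b }

/-- The second largest singular value `σ₂(C_α^{I → J})`, with respect to the inner
products weighted by the pinned marginals `π_I^{(α)}` and `π_J^{(α)}`. -/
def sigma2C (X : WPC n U) (S I J : Finset (Fin n)) (α : PAssign U S) : ℝ :=
  sigma2 (fun τI : PAssign U I => cmarg X α τI) (fun τJ : PAssign U J => cmarg X α τJ)
    (Cwalk X S I J α)

/-- `ε^{I → J}`: the maximum of `σ₂(C_α^{I → J})` over all partial assignments `α`
to the coordinates outside `I ∪ J` (realizable on `Ω`). -/
def epsIJ (X : WPC n U) (I J : Finset (Fin n)) : ℝ :=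
  sSup { r : ℝ | ∃ α : PAssign U (I ∪ J)ᶜ,
    0 < marg X (I ∪ J)ᶜ α ∧ r = sigma2C X (I ∪ J)ᶜ I J α }

/-- `π` is `(ε 0, …, ε (n-2))`-product: for every realizable pinning `α` of a set `S` of at
most `n - 2` coordinates, and all distinct `i, j ∉ S`, `σ₂(C_α^{i → j}) ≤ ε |S|`. -/
def isProduct (X : WPC n U) (ε : ℕ → ℝ) : Prop :=
  ∀ S : Finset (Fin n), S.card ≤ n - 2 → ∀ α : PAssign U S, 0 < marg X S α →
    ∀ i j : Fin n, i ∉ S → j ∉ S → i ≠ j → sigma2C X S {i} {j} α ≤ ε S.card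

/-- The update operator `Q_i`: resample the `i`-th coordinate according to `π`,
conditionally on all the other coordinates. -/
def Qmat (X : WPC n U) (i : Fin n) : Matrix (∀ i, U i) (∀ i, U i) ℝ :=
  Matrix.of fun ω ω' =>
    pr X (fun τ => τ = ω' ∧ restr {i}ᶜ τ = restr {i}ᶜ ω) /
      pr X (fun τ => restr {i}ᶜ τ = restr {i}ᶜ ω)

/-- The sequential sweep `P_seq^{(s)} = Q_{s 0} Q_{s 1} ⋯ Q_{s (n-1)}`. -/
def Psq (X : WPC n U) (s : Equiv.Perm (Fin n)) : Matrix (∀ i, U i) (∀ i, U i) ℝ :=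
  (List.ofFn fun j : Fin n => Qmat X (s j)).prod

/-- The second largest singular value of the sequential sweep, with respect to the
inner product weighted by its stationary distribution `π`. -/
def sigma2P (X : WPC n U) (s : Equiv.Perm (Fin n)) : ℝ :=
  sigma2 X.π X.π fun ω ω' => Psq X s ω ω'

/-- The link graph `G_α` of a pinning `α` of the coordinates in `S`: vertices are pairs
`(i, x)` with `i ∉ S`, and `(i,x)`, `(j,y)` are adjacent when `i ≠ j` and the event
`{ω_i = x, ω_j = y, ω_S = α}` has positive probability. -/
def linkGraph (X : WPC n U) (S : Finset (Fin n)) (α : PAssign U S) :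
    SimpleGraph ((i : Fin n) × U i) where
  Adj v w := v.1 ≠ w.1 ∧ v.1 ∉ S ∧ w.1 ∉ S ∧
    0 < pr X fun ω => restr S ω = α ∧ ω v.1 = v.2 ∧ ω w.1 = w.2
  symm := by
    refine ⟨?_⟩
    rintro v w ⟨h1, h2, h3, h4⟩
    refine ⟨h1.symm, h3, h2, ?_⟩
    have e : pr X (fun ω => restr S ω = α ∧ ω w.1 = w.2 ∧ ω v.1 = v.2)
        = pr X (fun ω => restr S ω = α ∧ ω v.1 = v.2 ∧ ω w.1 = w.2) :=
      pr_congr X fun ω => by tauto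
    rw [e]; exact h4
  loopless := by refine ⟨?_⟩; rintro v ⟨h1, -⟩; exact h1 rfl

/-- `(X, π)` is link-connected: in every link graph (of a realizable pinning of at most
`n - 2` coordinates), every two valid vertices are connected by a path. -/
def linkConnected (X : WPC n U) : Prop :=
  ∀ S : Finset (Fin n), S.card ≤ n - 2 → ∀ α : PAssign U S, 0 < marg X S α →
    ∀ v w : (i : Fin n) × U i, v.1 ∉ S → w.1 ∉ S →
      0 < pr X (fun ω => restr S ω = α ∧ ω v.1 = v.2) →
      0 < pr X (fun ω => restr S ω = α ∧ ω w.1 = w.2) →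
      (linkGraph X S α).Reachable v w

/-- The stationary measure of the random walk on the link graph `G_α`. -/
def linkMeas (X : WPC n U) (S : Finset (Fin n)) (α : PAssign U S) :
    (i : Fin n) × U i → ℝ :=
  fun v => if v.1 ∈ S then 0 else
    (1 / ((n : ℝ) - (S.card : ℝ))) *
      (pr X (fun ω => restr S ω = α ∧ ω v.1 = v.2) / marg X S α)

/-- The random walk matrix `M_α` of the link graph `G_α`. -/
def linkWalk (X : WPC n U) (S : Finset (Fin n)) (α : PAssign U S) :
    (i : Fin n) × U i → (i : Fin n) × U i → ℝ :=
  fun v w =>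
    if v.1 = w.1 ∨ v.1 ∈ S ∨ w.1 ∈ S then 0 else
      (1 / ((n : ℝ) - (S.card : ℝ) - 1)) *
        (pr X (fun ω => restr S ω = α ∧ ω v.1 = v.2 ∧ ω w.1 = w.2) /
          pr X (fun ω => restr S ω = α ∧ ω v.1 = v.2))

/-- The second largest eigenvalue of a random walk matrix `M`, self-adjoint with respect
to the probability measure `μ`, via its variational characterization. -/
def lambda2 {A : Type*} [Fintype A] (μ : A → ℝ) (M : A → A → ℝ) : ℝ :=
  sSup { r : ℝ | ∃ f : A → ℝ,
    (∑ a, μ a * f a) = 0 ∧ (∑ a, μ a * f a ^ 2) = 1 ∧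
    r = ∑ a, μ a * f a * ∑ b, M a b * f b }

/-- `(X, π)` is a `(γ 0, …, γ (n-2))`-local spectral expander:
`λ₂(M_α) ≤ γ |S|` for every realizable pinning `α` of at most `n - 2` coordinates. -/
def isLocalExpander (X : WPC n U) (γ : ℕ → ℝ) : Prop :=
  ∀ S : Finset (Fin n), S.card ≤ n - 2 → ∀ α : PAssign U S, 0 < marg X S α →
    lambda2 (linkMeas X S α) (linkWalk X S α) ≤ γ S.card

/-- Kullback–Leibler divergence `D(μ ‖ ν) = Σ_a μ(a) log (μ(a) / ν(a))`. -/
def KL {A : Type*} [Fintype A] (μ ν : A → ℝ) : ℝ :=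
  ∑ a, μ a * Real.log (μ a / ν a)

/-- `μ` is a probability distribution supported on `{a | P a}`. -/
def distOn {A : Type*} [Fintype A] (P : A → Prop) (μ : A → ℝ) : Prop :=
  (∀ a, 0 ≤ μ a) ∧ (∑ a, μ a) = 1 ∧ ∀ a, ¬ P a → μ a = 0

/-- The `(I, J)` entropy contraction parameter `η^{I → J} = 1 - κ^{I → J}`, where
`κ^{I → J}` is the supremum of `D(μ C_α^{I→J} ‖ π_J^{(α)}) / D(μ ‖ π_I^{(α)})` over all
realizable pinnings `α` of the coordinates outside `I ∪ J` and all distributions `μ` on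
the assignments of `I` compatible with `α`. -/
def etaIJ (X : WPC n U) (I J : Finset (Fin n)) : ℝ :=
  1 - sSup { r : ℝ | ∃ α : PAssign U (I ∪ J)ᶜ, 0 < marg X (I ∪ J)ᶜ α ∧
    ∃ μ : PAssign U I → ℝ,
      distOn (fun τ => 0 < pr X fun ω => restr (I ∪ J)ᶜ ω = α ∧ restr I ω = τ) μ ∧
      KL μ (fun τ : PAssign U I => cmarg X α τ) ≠ 0 ∧
      r = KL (fun τJ : PAssign U J => ∑ τI : PAssign U I, μ τI * Cwalk X (I ∪ J)ᶜ I J α τI τJ)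
            (fun τJ : PAssign U J => cmarg X α τJ) /
          KL μ (fun τ : PAssign U I => cmarg X α τ) }

/-- The entropy contraction factor `EC(M) = 1 - sup_μ D(μ M ‖ π) / D(μ ‖ π)` of a random
walk matrix `M` with stationary distribution `π`. -/
def EC (X : WPC n U) (M : Matrix (∀ i, U i) (∀ i, U i) ℝ) : ℝ :=
  1 - sSup { r : ℝ | ∃ μ : (∀ i, U i) → ℝ, distOn (fun ω => ω ∈ X.Ω) μ ∧
    KL μ X.π ≠ 0 ∧ r = KL (Matrix.vecMul μ M) X.π / KL μ X.π }

/-- The `π`-weighted inner product on `ℝ^Ω`. -/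
def ip (X : WPC n U) (f g : {ω // ω ∈ X.Ω} → ℝ) : ℝ :=
  ∑ ω : {ω // ω ∈ X.Ω}, X.π ω.1 * f ω * g ω

/-- The indicator vector `u_α ∈ ℝ^Ω` of the partial assignment `α` to the coordinates
outside `T`. -/
def uvec (X : WPC n U) (T : Finset (Fin n)) (α : PAssign U Tᶜ) : {ω // ω ∈ X.Ω} → ℝ :=
  fun ω => if restr Tᶜ ω.1 = α then 1 else 0

/-- The subspace `U_T = span { u_α : α an assignment to the coordinates outside T }`. -/
def Uspan (X : WPC n U) (T : Finset (Fin n)) : Submodule ℝ ({ω // ω ∈ X.Ω} → ℝ) :=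
  Submodule.span ℝ { f | ∃ α : PAssign U Tᶜ, f = uvec X T α }

/-- The subspace of functions on `Ω` depending only on the coordinates outside `T`. -/
def Uinv (X : WPC n U) (T : Finset (Fin n)) : Submodule ℝ ({ω // ω ∈ X.Ω} → ℝ) where
  carrier := { f | ∀ ω ω' : {ω // ω ∈ X.Ω}, restr Tᶜ ω.1 = restr Tᶜ ω'.1 → f ω = f ω' }
  add_mem' := by
    intro f g hf hg ω ω' h
    simp only [Pi.add_apply, hf ω ω' h, hg ω ω' h]
  zero_mem' := by intro ω ω' h; rfl
  smul_mem' := by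
    intro c f hf ω ω' h
    simp only [Pi.smul_apply, hf ω ω' h]

/-- The orthogonal complement (with respect to `⟨·,·⟩_π`) of a subspace, as a set. -/
def orthC (X : WPC n U) (W : Submodule ℝ ({ω // ω ∈ X.Ω} → ℝ)) :
    Set ({ω // ω ∈ X.Ω} → ℝ) :=
  { f | ∀ g ∈ W, ip X f g = 0 }

/-- The cosine of the angle between two subspaces of `ℝ^Ω`:
`cos(A,B) = sup { ⟨u,v⟩_π : u ∈ A ∩ (A ⊓ B)ᗮ, v ∈ B ∩ (A ⊓ B)ᗮ, ‖u‖_π = ‖v‖_π = 1 }`. -/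
def cosAngle (X : WPC n U) (A B : Submodule ℝ ({ω // ω ∈ X.Ω} → ℝ)) : ℝ :=
  sSup { r : ℝ | ∃ u, u ∈ A ∧ u ∈ orthC X (A ⊓ B) ∧
    ∃ v, v ∈ B ∧ v ∈ orthC X (A ⊓ B) ∧
    ip X u u = 1 ∧ ip X v v = 1 ∧ r = ip X u v }

/-- The update operator `Q_i` as an operator on `ℝ^Ω`. -/
def Qop (X : WPC n U) (i : Fin n) (f : {ω // ω ∈ X.Ω} → ℝ) : {ω // ω ∈ X.Ω} → ℝ :=
  fun ω => ∑ ω' : {ω // ω ∈ X.Ω}, Qmat X i ω.1 ω'.1 * f ω'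

/-- Concatenation of partial assignments on disjoint coordinate sets. -/
def joinAssign {S T : Finset (Fin n)} (β : PAssign U S) (α : PAssign U T) :
    PAssign U (S ∪ T) :=
  fun i => if h : i.1 ∈ S then β ⟨i.1, h⟩
    else α ⟨i.1, (Finset.mem_union.mp i.2).resolve_left h⟩

/-- The `S`-marginal of a (not necessarily normalized) distribution `ν` on tuples. -/
def distMarg (ν : (∀ i, U i) → ℝ) (S : Finset (Fin n)) (a : PAssign U S) : ℝ :=
  ∑ ω : ∀ i, U i, if restr S ω = a then ν ω else 0

/-- The distribution `ν` conditioned on the `i`-th coordinate being `x`. -/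
def condAt (ν : (∀ i, U i) → ℝ) (i : Fin n) (x : U i) : (∀ i, U i) → ℝ :=
  fun ω => if ω i = x then ν ω / (∑ ω' : ∀ i, U i, if ω' i = x then ν ω' else 0) else 0

/-- The influence matrix `Inf_α` of the pinning `α` of the coordinates in `S`:
`Inf_α((i,x),(j,y)) = Pr[ω_j = y | ω_i = x, ω_S = α] - Pr[ω_j = y | ω_S = α]`
for `i ≠ j` outside `S`, and `0` otherwise. -/
def InfMat (X : WPC n U) (S : Finset (Fin n)) (α : PAssign U S) :
    Matrix ((i : Fin n) × U i) ((i : Fin n) × U i) ℝ :=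
  Matrix.of fun v w =>
    if v.1 = w.1 ∨ v.1 ∈ S ∨ w.1 ∈ S then 0 else
      pr X (fun ω => restr S ω = α ∧ ω v.1 = v.2 ∧ ω w.1 = w.2) /
          pr X (fun ω => restr S ω = α ∧ ω v.1 = v.2) -
        pr X (fun ω => restr S ω = α ∧ ω w.1 = w.2) / marg X S α

/-- `π` is `(c 0, …, c (n-2))`-spectrally independent: every (real) eigenvalue of the
influence matrix of a realizable pinning of at most `n - 2` coordinates is at most
`c |S|`. -/
def spectrallyIndependent (X : WPC n U) (c : ℕ → ℝ) : Prop :=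
  ∀ S : Finset (Fin n), S.card ≤ n - 2 → ∀ α : PAssign U S, 0 < marg X S α →
    ∀ r : ℝ,
      (∃ v : ((i : Fin n) × U i) → ℝ, v ≠ 0 ∧ (InfMat X S α).mulVec v = r • v) →
      r ≤ c S.card

end PaperFormal

namespace PaperFormal

variable {n : ℕ} {U : Fin n → Type*} [∀ i, Fintype (U i)] [∀ i, DecidableEq (U i)]


section AuxLemmas
variable {n : ℕ} {U : Fin n → Type*} [∀ i, Fintype (U i)] [∀ i, DecidableEq (U i)]

lemma pr_nonneg (X : WPC n U) (E : (∀ i, U i) → Prop) : 0 ≤ pr X E :=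
  Finset.sum_nonneg fun ω _ => by split <;> [exact X.nonneg ω; exact le_rfl]

lemma pr_mono (X : WPC n U) {E F : (∀ i, U i) → Prop} (h : ∀ ω, E ω → F ω) :
    pr X E ≤ pr X F := by
  refine Finset.sum_le_sum fun ω _ => ?_
  by_cases hE : E ω
  · rw [if_pos hE, if_pos (h ω hE)]
  · rw [if_neg hE]
    split
    · exact X.nonneg ω
    · exact le_rfl

lemma pr_sum_fiber (X : WPC n U) (E : (∀ i, U i) → Prop) (k : Fin n) :
    ∑ y : U k, pr X (fun ω => E ω ∧ ω k = y) = pr X E := by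
  unfold pr
  rw [Finset.sum_comm]
  refine Finset.sum_congr rfl fun ω _ => ?_
  by_cases hE : E ω
  · simp [hE]
  · simp [hE]

def single (i : Fin n) (x : U i) : PAssign U {i} := fun k =>
  cast (congrArg U (Finset.mem_singleton.mp k.2).symm) x

omit [∀ i, Fintype (U i)] [∀ i, DecidableEq (U i)] in
lemma restr_single_iff (i : Fin n) (x : U i) (ω : ∀ k, U k) :
    restr {i} ω = single i x ↔ ω i = x := by
  constructor
  · intro h
    exact congrFun h ⟨i, Finset.mem_singleton_self i⟩
  · intro h
    funext k
    rcases k with ⟨k1, hk1⟩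
    have hki : k1 = i := Finset.mem_singleton.mp hk1
    subst hki
    exact h

def singleEquiv (i : Fin n) : U i ≃ PAssign U {i} where
  toFun := single i
  invFun τ := τ ⟨i, Finset.mem_singleton_self i⟩
  left_inv x := rfl
  right_inv τ := by
    funext k
    rcases k with ⟨k1, hk1⟩
    have hki : k1 = i := Finset.mem_singleton.mp hk1
    subst hki
    rfl

omit [∀ i, Fintype (U i)] [∀ i, DecidableEq (U i)] in
lemma sum_over_single {i : Fin n} [Fintype (U i)] [∀ i, Fintype (U i)]
    (F : PAssign U {i} → ℝ) :
    (∑ a : PAssign U {i}, F a) = ∑ x : U i, F (single i x) :=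
  (Fintype.sum_equiv (singleEquiv i) _ _ (fun _ => rfl)).symm

def embedF (k0 : Fin n) (f : U k0 → ℝ) : ((k : Fin n) × U k) → ℝ :=
  fun v => if h : v.1 = k0 then f (cast (congrArg U h) v.2) else 0

omit [∀ i, Fintype (U i)] [∀ i, DecidableEq (U i)] in
lemma embedF_same (k0 : Fin n) (f : U k0 → ℝ) (x : U k0) : embedF k0 f ⟨k0, x⟩ = f x := by
  simp [embedF]

omit [∀ i, Fintype (U i)] [∀ i, DecidableEq (U i)] in
lemma embedF_ne {k0 : Fin n} (f : U k0 → ℝ) {v : (k : Fin n) × U k} (h : v.1 ≠ k0) :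
    embedF k0 f v = 0 := dif_neg h

lemma sum_embedF (k0 : Fin n) (f : U k0 → ℝ) (w : ((k : Fin n) × U k) → ℝ) :
    ∑ v : (k : Fin n) × U k, w v * embedF k0 f v = ∑ x : U k0, w ⟨k0, x⟩ * f x := by
  rw [← Finset.univ_sigma_univ, Finset.sum_sigma]
  rw [Finset.sum_eq_single_of_mem k0 (Finset.mem_univ _)
    (fun k _ hk => Finset.sum_eq_zero fun x _ => by rw [embedF_ne f hk, mul_zero])]
  exact Finset.sum_congr rfl fun x _ => by rw [embedF_same]

end AuxLemmas

set_option maxHeartbeats 2000000 in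
theorem isProduct_of_localExpander
    (X : WPC n U) (γ : ℕ → ℝ) (hγ : ∀ m, 0 ≤ γ m) (hexp : isLocalExpander X γ) :
    isProduct X fun m => ((n : ℝ) - 1 - (m : ℝ)) * γ m := by
  intro S hS α hα i j hiS hjS hij
  have hm0 : marg X S α ≠ 0 := ne_of_gt hα
  have hn2 : 2 ≤ n := by
    rcases Nat.lt_or_ge n 2 with h | h
    · have hi := i.isLt
      have hj := j.isLt
      exact absurd (Fin.ext (by omega)) hij
    · exact h
  have hcard : S.card + 2 ≤ n := by
    have h1 : S.card ≤ n - 2 := hS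
    omega
  have hNs2 : (2 : ℝ) ≤ (n : ℝ) - (S.card : ℝ) := by
    have : ((S.card : ℕ) : ℝ) + 2 ≤ (n : ℝ) := by exact_mod_cast hcard
    linarith
  have hNspos : (0 : ℝ) < (n : ℝ) - (S.card : ℝ) := by linarith
  have hNs1pos : (0 : ℝ) < (n : ℝ) - (S.card : ℝ) - 1 := by linarith
  have hNsne : ((n : ℝ) - (S.card : ℝ)) ≠ 0 := ne_of_gt hNspos
  have hNs1ne : ((n : ℝ) - (S.card : ℝ) - 1) ≠ 0 := ne_of_gt hNs1pos
  have hbound0 : (0:ℝ) ≤ ((n : ℝ) - 1 - (S.card : ℝ)) * γ S.card :=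
    mul_nonneg (by linarith) (hγ S.card)
  show sigma2C X S {i} {j} α ≤ ((n : ℝ) - 1 - (S.card : ℝ)) * γ S.card
  unfold sigma2C sigma2
  refine Real.sSup_le ?_ hbound0
  rintro r ⟨f, g, hf0, hg0, hf1, hg1, hr⟩
  set P1 : U i → ℝ := fun x => pr X fun ω => restr S ω = α ∧ ω i = x with hP1def
  set Q1 : U j → ℝ := fun y => pr X fun ω => restr S ω = α ∧ ω j = y with hQ1def
  set P2 : U i → U j → ℝ := fun x y => pr X fun ω => restr S ω = α ∧ ω i = x ∧ ω j = y
    with hP2def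
  have hP1nn : ∀ x, 0 ≤ P1 x := fun x => pr_nonneg X _
  have hQ1nn : ∀ y, 0 ≤ Q1 y := fun y => pr_nonneg X _
  have hP2nn : ∀ x y, 0 ≤ P2 x y := fun x y => pr_nonneg X _
  have hP2leP1 : ∀ x y, P2 x y ≤ P1 x := fun x y => pr_mono X fun ω h => ⟨h.1, h.2.1⟩
  have hP2leQ1 : ∀ x y, P2 x y ≤ Q1 y := fun x y => pr_mono X fun ω h => ⟨h.1, h.2.2⟩
  have hP2z1 : ∀ x y, P1 x = 0 → P2 x y = 0 := fun x y h =>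
    le_antisymm (h ▸ hP2leP1 x y) (hP2nn x y)
  have hP2z2 : ∀ x y, Q1 y = 0 → P2 x y = 0 := fun x y h =>
    le_antisymm (h ▸ hP2leQ1 x y) (hP2nn x y)
  -- rewrite sums over partial assignments as sums over U i / U j
  rw [sum_over_single] at hf0 hf1 hr
  rw [sum_over_single] at hg0 hg1
  simp only [sum_over_single] at hr
  -- identify cmarg and Cwalk entries
  have hcm_i : ∀ x : U i, cmarg X α (single i x) = P1 x / marg X S α := by
    intro x
    unfold cmarg
    rw [pr_congr X (fun ω => and_congr Iff.rfl (restr_single_iff i x ω))]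
  have hcm_j : ∀ y : U j, cmarg X α (single j y) = Q1 y / marg X S α := by
    intro y
    unfold cmarg
    rw [pr_congr X (fun ω => and_congr Iff.rfl (restr_single_iff j y ω))]
  have hcw : ∀ (x : U i) (y : U j),
      Cwalk X S {i} {j} α (single i x) (single j y) = P2 x y / P1 x := by
    intro x y
    unfold Cwalk
    rw [pr_congr X (fun ω => and_congr Iff.rfl
        (and_congr (restr_single_iff i x ω) (restr_single_iff j y ω))),
      pr_congr X (fun ω => and_congr Iff.rfl (restr_single_iff i x ω))]
  simp only [hcm_i, hcm_j, hcw] at hf0 hf1 hg0 hg1 hr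
  -- normalized forms
  have hf0' : ∑ x : U i, P1 x * f (single i x) = 0 := by
    have h1 : ∑ x : U i, P1 x * f (single i x)
        = marg X S α * ∑ x : U i, P1 x / marg X S α * f (single i x) := by
      rw [Finset.mul_sum]
      refine Finset.sum_congr rfl fun x _ => ?_
      field_simp
    rw [h1, hf0, mul_zero]
  have hg0' : ∑ y : U j, Q1 y * g (single j y) = 0 := by
    have h1 : ∑ y : U j, Q1 y * g (single j y)
        = marg X S α * ∑ y : U j, Q1 y / marg X S α * g (single j y) := by
      rw [Finset.mul_sum]
      refine Finset.sum_congr rfl fun y _ => ?_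
      field_simp
    rw [h1, hg0, mul_zero]
  have hf1' : ∑ x : U i, P1 x * f (single i x) ^ 2 = marg X S α := by
    have h1 : ∑ x : U i, P1 x * f (single i x) ^ 2
        = marg X S α * ∑ x : U i, P1 x / marg X S α * f (single i x) ^ 2 := by
      rw [Finset.mul_sum]
      refine Finset.sum_congr rfl fun x _ => ?_
      field_simp
    rw [h1, hf1, mul_one]
  have hg1' : ∑ y : U j, Q1 y * g (single j y) ^ 2 = marg X S α := by
    have h1 : ∑ y : U j, Q1 y * g (single j y) ^ 2
        = marg X S α * ∑ y : U j, Q1 y / marg X S α * g (single j y) ^ 2 := by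
      rw [Finset.mul_sum]
      refine Finset.sum_congr rfl fun y _ => ?_
      field_simp
    rw [h1, hg1, mul_one]
  have hr' : r = (1 / marg X S α) *
      ∑ x : U i, ∑ y : U j, P2 x y * f (single i x) * g (single j y) := by
    rw [hr, Finset.mul_sum]
    refine Finset.sum_congr rfl fun x _ => ?_
    by_cases hx : P1 x = 0
    · rw [hx]
      have hz : ∀ y : U j, P2 x y = 0 := fun y => hP2z1 x y hx
      simp [hz]
    · rw [Finset.mul_sum, Finset.mul_sum]
      refine Finset.sum_congr rfl fun y _ => ?_
      field_simp
  -- the link walk data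
  set μ := linkMeas X S α with hμdef
  set M := linkWalk X S α with hMdef
  have hμS : ∀ v : (k : Fin n) × U k, v.1 ∈ S → μ v = 0 := by
    intro v hv
    rw [hμdef]
    simp [linkMeas, hv]
  have hμn : ∀ v : (k : Fin n) × U k, v.1 ∉ S →
      μ v = 1 / ((n : ℝ) - (S.card : ℝ)) *
        (pr X (fun ω => restr S ω = α ∧ ω v.1 = v.2) / marg X S α) := by
    intro v hv
    rw [hμdef]
    simp [linkMeas, hv]
  have hμnn : ∀ v, 0 ≤ μ v := by
    intro v
    by_cases hv : v.1 ∈ S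
    · rw [hμS v hv]
    · rw [hμn v hv]
      exact mul_nonneg (by positivity)
        (div_nonneg (pr_nonneg X _) hα.le)
  have hMcond : ∀ v w : (k : Fin n) × U k, (v.1 = w.1 ∨ v.1 ∈ S ∨ w.1 ∈ S) → M v w = 0 := by
    intro v w h
    rw [hMdef]
    simp [linkWalk, h]
  have hMn : ∀ v w : (k : Fin n) × U k, ¬(v.1 = w.1 ∨ v.1 ∈ S ∨ w.1 ∈ S) →
      M v w = 1 / ((n : ℝ) - (S.card : ℝ) - 1) *
        (pr X (fun ω => restr S ω = α ∧ ω v.1 = v.2 ∧ ω w.1 = w.2) /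
          pr X (fun ω => restr S ω = α ∧ ω v.1 = v.2)) := by
    intro v w h
    rw [hMdef]
    simp only [linkWalk, if_neg h]
  have hMnn : ∀ v w, 0 ≤ M v w := by
    intro v w
    by_cases h : v.1 = w.1 ∨ v.1 ∈ S ∨ w.1 ∈ S
    · rw [hMcond v w h]
    · rw [hMn v w h]
      exact mul_nonneg (by positivity) (div_nonneg (pr_nonneg X _) (pr_nonneg X _))
  -- the kernel K v w = μ v * M v w
  have hKgen : ∀ v w : (k : Fin n) × U k,
      μ v * M v w = if v.1 = w.1 ∨ v.1 ∈ S ∨ w.1 ∈ S then 0 else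
        1 / (((n : ℝ) - (S.card : ℝ)) * ((n : ℝ) - (S.card : ℝ) - 1) * marg X S α) *
          pr X (fun ω => restr S ω = α ∧ ω v.1 = v.2 ∧ ω w.1 = w.2) := by
    intro v w
    by_cases h : v.1 = w.1 ∨ v.1 ∈ S ∨ w.1 ∈ S
    · rw [if_pos h, hMcond v w h, mul_zero]
    · rw [if_neg h, hμn v (fun hv => h (Or.inr (Or.inl hv))), hMn v w h]
      by_cases hPv : pr X (fun ω => restr S ω = α ∧ ω v.1 = v.2) = 0
      · have hPvw : pr X (fun ω => restr S ω = α ∧ ω v.1 = v.2 ∧ ω w.1 = w.2) = 0 :=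
          le_antisymm (hPv ▸ pr_mono X fun ω hh => ⟨hh.1, hh.2.1⟩) (pr_nonneg X _)
        rw [hPv, hPvw]
        simp
      · field_simp
  have hKsym : ∀ v w : (k : Fin n) × U k, μ v * M v w = μ w * M w v := by
    intro v w
    rw [hKgen v w, hKgen w v]
    by_cases h : v.1 = w.1 ∨ v.1 ∈ S ∨ w.1 ∈ S
    · have h' : w.1 = v.1 ∨ w.1 ∈ S ∨ v.1 ∈ S := by
        rcases h with h | h | h
        · exact Or.inl h.symm
        · exact Or.inr (Or.inr h)
        · exact Or.inr (Or.inl h)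
      rw [if_pos h, if_pos h']
    · have h' : ¬(w.1 = v.1 ∨ w.1 ∈ S ∨ v.1 ∈ S) := by
        intro hh
        apply h
        rcases hh with hh | hh | hh
        · exact Or.inl hh.symm
        · exact Or.inr (Or.inr hh)
        · exact Or.inr (Or.inl hh)
      rw [if_neg h, if_neg h']
      have hpq : pr X (fun ω => restr S ω = α ∧ ω v.1 = v.2 ∧ ω w.1 = w.2)
          = pr X (fun ω => restr S ω = α ∧ ω w.1 = w.2 ∧ ω v.1 = v.2) :=
        pr_congr X fun ω => by tauto
      rw [hpq]
  -- row sums of M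
  have hrowM : ∀ v : (k : Fin n) × U k, v.1 ∉ S →
      pr X (fun ω => restr S ω = α ∧ ω v.1 = v.2) ≠ 0 →
      ∑ w : (k : Fin n) × U k, M v w = 1 := by
    intro v hvS hPv
    have hks : ∀ k : Fin n, (∑ x : U k, M v ⟨k, x⟩)
        = if v.1 = k ∨ k ∈ S then 0 else 1 / ((n : ℝ) - (S.card : ℝ) - 1) := by
      intro k
      by_cases hk : v.1 = k ∨ k ∈ S
      · rw [if_pos hk]
        refine Finset.sum_eq_zero fun x _ => hMcond v ⟨k, x⟩ ?_
        rcases hk with hk | hk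
        · exact Or.inl hk
        · exact Or.inr (Or.inr hk)
      · rw [if_neg hk]
        have hcond : ∀ x : U k, ¬(v.1 = (⟨k, x⟩ : (k : Fin n) × U k).1 ∨ v.1 ∈ S ∨
            (⟨k, x⟩ : (k : Fin n) × U k).1 ∈ S) := by
          intro x hh
          rcases hh with hh | hh | hh
          · exact hk (Or.inl hh)
          · exact hvS hh
          · exact hk (Or.inr hh)
        calc ∑ x : U k, M v ⟨k, x⟩
            = ∑ x : U k, 1 / ((n : ℝ) - (S.card : ℝ) - 1) *
              (pr X (fun ω => (restr S ω = α ∧ ω v.1 = v.2) ∧ ω k = x) /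
                pr X (fun ω => restr S ω = α ∧ ω v.1 = v.2)) := by
              refine Finset.sum_congr rfl fun x _ => ?_
              rw [hMn v ⟨k, x⟩ (hcond x)]
              rw [pr_congr X (fun ω => (and_assoc).symm :
                ∀ ω, (restr S ω = α ∧ ω v.1 = v.2 ∧ ω k = x) ↔
                  ((restr S ω = α ∧ ω v.1 = v.2) ∧ ω k = x))]
          _ = 1 / ((n : ℝ) - (S.card : ℝ) - 1) *
              ((∑ x : U k, pr X (fun ω => (restr S ω = α ∧ ω v.1 = v.2) ∧ ω k = x)) /
                pr X (fun ω => restr S ω = α ∧ ω v.1 = v.2)) := by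
              rw [Finset.sum_div, Finset.mul_sum]
          _ = 1 / ((n : ℝ) - (S.card : ℝ) - 1) := by
              rw [pr_sum_fiber X (fun ω => restr S ω = α ∧ ω v.1 = v.2) k,
                div_self hPv, mul_one]
    rw [← Finset.univ_sigma_univ, Finset.sum_sigma]
    rw [Finset.sum_congr rfl fun k _ => hks k]
    rw [Finset.sum_ite, Finset.sum_const_zero, zero_add, Finset.sum_const]
    have hfilt : Finset.univ.filter (fun k : Fin n => ¬(v.1 = k ∨ k ∈ S))
        = (insert v.1 S)ᶜ := by
      ext k
      simp only [Finset.mem_filter, Finset.mem_univ, true_and, Finset.mem_compl,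
        Finset.mem_insert]
      rw [eq_comm]
    rw [hfilt, Finset.card_compl, Finset.card_insert_of_notMem hvS, Fintype.card_fin,
      nsmul_eq_mul, Nat.cast_sub (by omega)]
    push_cast
    field_simp
    ring
  have hrowK : ∀ v : (k : Fin n) × U k, ∑ w : (k : Fin n) × U k, μ v * M v w ≤ μ v := by
    intro v
    rw [← Finset.mul_sum]
    by_cases hvS : v.1 ∈ S
    · rw [hμS v hvS, zero_mul]
    · by_cases hPv : pr X (fun ω => restr S ω = α ∧ ω v.1 = v.2) = 0
      · have hμ0 : μ v = 0 := by rw [hμn v hvS, hPv]; simp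
        rw [hμ0, zero_mul]
      · rw [hrowM v hvS hPv, mul_one]
  -- embedded test functions on the link
  set F : ((k : Fin n) × U k) → ℝ := embedF i (fun x => f (single i x)) with hFdef
  set G : ((k : Fin n) × U k) → ℝ := embedF j (fun y => g (single j y)) with hGdef
  have hμi : ∀ x : U i, μ ⟨i, x⟩ = 1 / ((n : ℝ) - (S.card : ℝ)) * (P1 x / marg X S α) :=
    fun x => hμn ⟨i, x⟩ hiS
  have hμj : ∀ y : U j, μ ⟨j, y⟩ = 1 / ((n : ℝ) - (S.card : ℝ)) * (Q1 y / marg X S α) :=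
    fun y => hμn ⟨j, y⟩ hjS
  have hKij : ∀ (x : U i) (y : U j), μ ⟨i, x⟩ * M ⟨i, x⟩ ⟨j, y⟩
      = 1 / (((n : ℝ) - (S.card : ℝ)) * ((n : ℝ) - (S.card : ℝ) - 1) * marg X S α)
        * P2 x y := by
    intro x y
    have hc : ¬((⟨i, x⟩ : (k : Fin n) × U k).1 = (⟨j, y⟩ : (k : Fin n) × U k).1 ∨
        (⟨i, x⟩ : (k : Fin n) × U k).1 ∈ S ∨ (⟨j, y⟩ : (k : Fin n) × U k).1 ∈ S) := by
      intro h
      rcases h with h | h | h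
      · exact hij h
      · exact hiS h
      · exact hjS h
    rw [hKgen, if_neg hc]
  have hKji : ∀ (x : U i) (y : U j), μ ⟨j, y⟩ * M ⟨j, y⟩ ⟨i, x⟩
      = 1 / (((n : ℝ) - (S.card : ℝ)) * ((n : ℝ) - (S.card : ℝ) - 1) * marg X S α)
        * P2 x y := by
    intro x y
    have hc : ¬((⟨j, y⟩ : (k : Fin n) × U k).1 = (⟨i, x⟩ : (k : Fin n) × U k).1 ∨
        (⟨j, y⟩ : (k : Fin n) × U k).1 ∈ S ∨ (⟨i, x⟩ : (k : Fin n) × U k).1 ∈ S) := by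
      intro h
      rcases h with h | h | h
      · exact hij h.symm
      · exact hjS h
      · exact hiS h
    rw [hKgen, if_neg hc]
    have hpq : pr X (fun ω => restr S ω = α ∧ ω j = y ∧ ω i = x)
        = pr X (fun ω => restr S ω = α ∧ ω i = x ∧ ω j = y) :=
      pr_congr X fun ω => by tauto
    rw [hpq]
  -- mean zero and norms
  have hSF0 : ∑ v : (k : Fin n) × U k, μ v * F v = 0 := by
    rw [hFdef, sum_embedF]
    beta_reduce
    have h1 : ∀ x : U i, μ ⟨i, x⟩ * f (single i x)
        = 1 / ((n : ℝ) - (S.card : ℝ)) * (1 / marg X S α) * (P1 x * f (single i x)) := by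
      intro x; rw [hμi x]; ring
    rw [Finset.sum_congr rfl fun x _ => h1 x, ← Finset.mul_sum, hf0', mul_zero]
  have hSG0 : ∑ v : (k : Fin n) × U k, μ v * G v = 0 := by
    rw [hGdef, sum_embedF]
    beta_reduce
    have h1 : ∀ y : U j, μ ⟨j, y⟩ * g (single j y)
        = 1 / ((n : ℝ) - (S.card : ℝ)) * (1 / marg X S α) * (Q1 y * g (single j y)) := by
      intro y; rw [hμj y]; ring
    rw [Finset.sum_congr rfl fun y _ => h1 y, ← Finset.mul_sum, hg0', mul_zero]
  have hSF2 : ∑ v : (k : Fin n) × U k, μ v * F v ^ 2 = 1 / ((n : ℝ) - (S.card : ℝ)) := by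
    have h0 : ∀ v : (k : Fin n) × U k, μ v * F v ^ 2 = (μ v * F v) * F v := fun v => by ring
    rw [Finset.sum_congr rfl fun v _ => h0 v, hFdef, sum_embedF]
    beta_reduce
    simp only [embedF_same]
    have h1 : ∀ x : U i, μ ⟨i, x⟩ * f (single i x) * f (single i x)
        = 1 / ((n : ℝ) - (S.card : ℝ)) * (1 / marg X S α) * (P1 x * f (single i x) ^ 2) := by
      intro x; rw [hμi x]; ring
    rw [Finset.sum_congr rfl fun x _ => h1 x, ← Finset.mul_sum, hf1']
    field_simp
  have hSG2 : ∑ v : (k : Fin n) × U k, μ v * G v ^ 2 = 1 / ((n : ℝ) - (S.card : ℝ)) := by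
    have h0 : ∀ v : (k : Fin n) × U k, μ v * G v ^ 2 = (μ v * G v) * G v := fun v => by ring
    rw [Finset.sum_congr rfl fun v _ => h0 v, hGdef, sum_embedF]
    beta_reduce
    simp only [embedF_same]
    have h1 : ∀ y : U j, μ ⟨j, y⟩ * g (single j y) * g (single j y)
        = 1 / ((n : ℝ) - (S.card : ℝ)) * (1 / marg X S α) * (Q1 y * g (single j y) ^ 2) := by
      intro y; rw [hμj y]; ring
    rw [Finset.sum_congr rfl fun y _ => h1 y, ← Finset.mul_sum, hg1']
    field_simp
  have hFG : ∀ v : (k : Fin n) × U k, F v * G v = 0 := by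
    intro v
    by_cases hv : v.1 = i
    · rw [hGdef, embedF_ne _ (fun h : v.1 = j => hij (hv.symm.trans h)), mul_zero]
    · rw [hFdef, embedF_ne _ hv, zero_mul]
  set c : ℝ := Real.sqrt (((n : ℝ) - (S.card : ℝ)) / 2) with hcdef
  have hc2 : c ^ 2 = ((n : ℝ) - (S.card : ℝ)) / 2 := Real.sq_sqrt (by linarith)
  have hE0 : ∑ v : (k : Fin n) × U k, μ v * (c * (F v + G v)) = 0 := by
    have h1 : ∀ v : (k : Fin n) × U k, μ v * (c * (F v + G v))
        = c * (μ v * F v) + c * (μ v * G v) := fun v => by ring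
    rw [Finset.sum_congr rfl fun v _ => h1 v, Finset.sum_add_distrib,
      ← Finset.mul_sum, ← Finset.mul_sum, hSF0, hSG0, mul_zero, add_zero]
  have hE1 : ∑ v : (k : Fin n) × U k, μ v * (c * (F v + G v)) ^ 2 = 1 := by
    have h1 : ∀ v : (k : Fin n) × U k, μ v * (c * (F v + G v)) ^ 2
        = c ^ 2 * (μ v * F v ^ 2) + c ^ 2 * (μ v * G v ^ 2) := by
      intro v
      have h2 := hFG v
      linear_combination 2 * c ^ 2 * μ v * h2
    rw [Finset.sum_congr rfl fun v _ => h1 v, Finset.sum_add_distrib,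
      ← Finset.mul_sum, ← Finset.mul_sum, hSF2, hSG2, hc2]
    field_simp
    ring
  -- the inner sums
  have hinner : ∀ v : (k : Fin n) × U k,
      (∑ w : (k : Fin n) × U k, M v w * (c * (F w + G w)))
        = c * ((∑ x : U i, M v ⟨i, x⟩ * f (single i x))
             + (∑ y : U j, M v ⟨j, y⟩ * g (single j y))) := by
    intro v
    have h1 : ∀ w : (k : Fin n) × U k, M v w * (c * (F w + G w))
        = c * (M v w * F w) + c * (M v w * G w) := fun w => by ring
    rw [Finset.sum_congr rfl fun w _ => h1 w, Finset.sum_add_distrib,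
      ← Finset.mul_sum, ← Finset.mul_sum, hFdef, hGdef, sum_embedF, sum_embedF, ← mul_add]
  -- the four pieces
  have hTFA : ∑ x : U i, (μ ⟨i, x⟩ * ∑ x' : U i, M ⟨i, x⟩ ⟨i, x'⟩ * f (single i x'))
      * f (single i x) = 0 := by
    refine Finset.sum_eq_zero fun x _ => ?_
    have h1 : ∑ x' : U i, M ⟨i, x⟩ ⟨i, x'⟩ * f (single i x') = 0 :=
      Finset.sum_eq_zero fun x' _ => by rw [hMcond ⟨i, x⟩ ⟨i, x'⟩ (Or.inl rfl), zero_mul]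
    rw [h1, mul_zero, zero_mul]
  have hTGB : ∑ y : U j, (μ ⟨j, y⟩ * ∑ y' : U j, M ⟨j, y⟩ ⟨j, y'⟩ * g (single j y'))
      * g (single j y) = 0 := by
    refine Finset.sum_eq_zero fun y _ => ?_
    have h1 : ∑ y' : U j, M ⟨j, y⟩ ⟨j, y'⟩ * g (single j y') = 0 :=
      Finset.sum_eq_zero fun y' _ => by rw [hMcond ⟨j, y⟩ ⟨j, y'⟩ (Or.inl rfl), zero_mul]
    rw [h1, mul_zero, zero_mul]
  have hTFB : ∑ x : U i, (μ ⟨i, x⟩ * ∑ y : U j, M ⟨i, x⟩ ⟨j, y⟩ * g (single j y))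
      * f (single i x)
      = 1 / (((n : ℝ) - (S.card : ℝ)) * ((n : ℝ) - (S.card : ℝ) - 1) * marg X S α)
        * ∑ x : U i, ∑ y : U j, P2 x y * f (single i x) * g (single j y) := by
    have h1 : ∀ x : U i, (μ ⟨i, x⟩ * ∑ y : U j, M ⟨i, x⟩ ⟨j, y⟩ * g (single j y))
        * f (single i x)
        = ∑ y : U j, 1 / (((n : ℝ) - (S.card : ℝ)) * ((n : ℝ) - (S.card : ℝ) - 1)
            * marg X S α) * (P2 x y * f (single i x) * g (single j y)) := by
      intro x
      rw [Finset.mul_sum, Finset.sum_mul]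
      refine Finset.sum_congr rfl fun y _ => ?_
      rw [show μ ⟨i, x⟩ * (M ⟨i, x⟩ ⟨j, y⟩ * g (single j y)) * f (single i x)
          = (μ ⟨i, x⟩ * M ⟨i, x⟩ ⟨j, y⟩) * (g (single j y) * f (single i x)) from by ring,
        hKij x y]
      ring
    rw [Finset.sum_congr rfl fun x _ => h1 x, Finset.mul_sum]
    refine Finset.sum_congr rfl fun x _ => ?_
    rw [Finset.mul_sum]
  have hTGA : ∑ y : U j, (μ ⟨j, y⟩ * ∑ x : U i, M ⟨j, y⟩ ⟨i, x⟩ * f (single i x))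
      * g (single j y)
      = 1 / (((n : ℝ) - (S.card : ℝ)) * ((n : ℝ) - (S.card : ℝ) - 1) * marg X S α)
        * ∑ x : U i, ∑ y : U j, P2 x y * f (single i x) * g (single j y) := by
    have h1 : ∀ y : U j, (μ ⟨j, y⟩ * ∑ x : U i, M ⟨j, y⟩ ⟨i, x⟩ * f (single i x))
        * g (single j y)
        = ∑ x : U i, 1 / (((n : ℝ) - (S.card : ℝ)) * ((n : ℝ) - (S.card : ℝ) - 1)
            * marg X S α) * (P2 x y * f (single i x) * g (single j y)) := by
      intro y
      rw [Finset.mul_sum, Finset.sum_mul]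
      refine Finset.sum_congr rfl fun x _ => ?_
      rw [show μ ⟨j, y⟩ * (M ⟨j, y⟩ ⟨i, x⟩ * f (single i x)) * g (single j y)
          = (μ ⟨j, y⟩ * M ⟨j, y⟩ ⟨i, x⟩) * (f (single i x) * g (single j y)) from by ring,
        hKji x y]
      ring
    rw [Finset.sum_congr rfl fun y _ => h1 y, Finset.sum_comm, Finset.mul_sum]
    refine Finset.sum_congr rfl fun x _ => ?_
    rw [Finset.mul_sum]
  -- the Rayleigh quotient value
  have hEV : r / ((n : ℝ) - (S.card : ℝ) - 1)
      = ∑ v : (k : Fin n) × U k, μ v * (c * (F v + G v)) *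
          ∑ w : (k : Fin n) × U k, M v w * (c * (F w + G w)) := by
    rw [Finset.sum_congr rfl fun v _ => by rw [hinner v]]
    have h1 : ∀ v : (k : Fin n) × U k,
        μ v * (c * (F v + G v)) * (c * ((∑ x : U i, M v ⟨i, x⟩ * f (single i x))
          + (∑ y : U j, M v ⟨j, y⟩ * g (single j y))))
        = c ^ 2 * ((μ v * ∑ x : U i, M v ⟨i, x⟩ * f (single i x)) * F v)
        + c ^ 2 * ((μ v * ∑ y : U j, M v ⟨j, y⟩ * g (single j y)) * F v)
        + c ^ 2 * ((μ v * ∑ x : U i, M v ⟨i, x⟩ * f (single i x)) * G v)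
        + c ^ 2 * ((μ v * ∑ y : U j, M v ⟨j, y⟩ * g (single j y)) * G v) := fun v => by ring
    rw [Finset.sum_congr rfl fun v _ => h1 v]
    rw [Finset.sum_add_distrib, Finset.sum_add_distrib, Finset.sum_add_distrib,
      ← Finset.mul_sum, ← Finset.mul_sum, ← Finset.mul_sum, ← Finset.mul_sum]
    rw [hFdef, hGdef, sum_embedF, sum_embedF, sum_embedF, sum_embedF]
    beta_reduce
    rw [hTFA, hTFB, hTGA, hTGB, hr', hc2]
    field_simp
    ring
  -- boundedness of the spectral set
  have hbdd : BddAbove { t : ℝ | ∃ h : ((i : Fin n) × U i) → ℝ,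
      (∑ a, μ a * h a) = 0 ∧ (∑ a, μ a * h a ^ 2) = 1 ∧
      t = ∑ a, μ a * h a * ∑ b, M a b * h b } := by
    refine ⟨1, ?_⟩
    rintro t ⟨h, h0, h1, ht⟩
    rw [ht]
    have e1 : ∀ v : (k : Fin n) × U k, μ v * h v * ∑ w : (k : Fin n) × U k, M v w * h w
        = ∑ w : (k : Fin n) × U k, (μ v * M v w) * (h v * h w) := by
      intro v
      rw [Finset.mul_sum]
      exact Finset.sum_congr rfl fun w _ => by ring
    rw [Finset.sum_congr rfl fun v _ => e1 v]
    have e2 : ∑ v : (k : Fin n) × U k, ∑ w : (k : Fin n) × U k, (μ v * M v w) * (h v * h w)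
        ≤ ∑ v : (k : Fin n) × U k, ∑ w : (k : Fin n) × U k,
            (μ v * M v w) * ((h v ^ 2 + h w ^ 2) / 2) := by
      refine Finset.sum_le_sum fun v _ => Finset.sum_le_sum fun w _ => ?_
      refine mul_le_mul_of_nonneg_left ?_ (mul_nonneg (hμnn v) (hMnn v w))
      nlinarith [sq_nonneg (h v - h w)]
    refine le_trans e2 ?_
    have e3 : ∀ v : (k : Fin n) × U k,
        (∑ w : (k : Fin n) × U k, (μ v * M v w) * ((h v ^ 2 + h w ^ 2) / 2))
        = (∑ w : (k : Fin n) × U k, (μ v * M v w) * h v ^ 2 / 2)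
          + ∑ w : (k : Fin n) × U k, (μ v * M v w) * h w ^ 2 / 2 := by
      intro v
      rw [← Finset.sum_add_distrib]
      exact Finset.sum_congr rfl fun w _ => by ring
    rw [Finset.sum_congr rfl fun v _ => e3 v, Finset.sum_add_distrib]
    have e5 : (∑ v : (k : Fin n) × U k, ∑ w : (k : Fin n) × U k, (μ v * M v w) * h w ^ 2 / 2)
        = ∑ v : (k : Fin n) × U k, ∑ w : (k : Fin n) × U k, (μ v * M v w) * h v ^ 2 / 2 := by
      rw [Finset.sum_comm]
      refine Finset.sum_congr rfl fun a _ => Finset.sum_congr rfl fun b _ => ?_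
      rw [hKsym b a]
    rw [e5]
    have e6 : ∀ v : (k : Fin n) × U k,
        (∑ w : (k : Fin n) × U k, (μ v * M v w) * h v ^ 2 / 2)
        = h v ^ 2 / 2 * ∑ w : (k : Fin n) × U k, μ v * M v w := by
      intro v
      rw [Finset.mul_sum]
      exact Finset.sum_congr rfl fun w _ => by ring
    rw [Finset.sum_congr rfl fun v _ => e6 v]
    have e7 : (∑ v : (k : Fin n) × U k, h v ^ 2 / 2 * ∑ w : (k : Fin n) × U k, μ v * M v w)
        ≤ ∑ v : (k : Fin n) × U k, h v ^ 2 / 2 * μ v :=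
      Finset.sum_le_sum fun v _ => mul_le_mul_of_nonneg_left (hrowK v) (by positivity)
    have e8 : (∑ v : (k : Fin n) × U k, h v ^ 2 / 2 * μ v)
        + (∑ v : (k : Fin n) × U k, h v ^ 2 / 2 * μ v) = 1 := by
      rw [← Finset.sum_add_distrib]
      rw [Finset.sum_congr rfl (fun v _ => by ring :
        ∀ v ∈ (Finset.univ : Finset ((k : Fin n) × U k)),
          h v ^ 2 / 2 * μ v + h v ^ 2 / 2 * μ v = μ v * h v ^ 2)]
      exact h1
    linarith
  -- conclusion
  have hlam2 : lambda2 μ M ≤ γ S.card := hexp S hS α hα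
  have hmem : r / ((n : ℝ) - (S.card : ℝ) - 1) ∈ { t : ℝ | ∃ h : ((i : Fin n) × U i) → ℝ,
      (∑ a, μ a * h a) = 0 ∧ (∑ a, μ a * h a ^ 2) = 1 ∧
      t = ∑ a, μ a * h a * ∑ b, M a b * h b } :=
    ⟨fun v => c * (F v + G v), hE0, hE1, hEV⟩
  have hlam : r / ((n : ℝ) - (S.card : ℝ) - 1) ≤ γ S.card := by
    refine le_trans ?_ hlam2
    unfold lambda2
    exact le_csSup hbdd hmem
  rw [div_le_iff₀ hNs1pos] at hlam
  calc r ≤ γ S.card * ((n : ℝ) - (S.card : ℝ) - 1) := hlam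
    _ = ((n : ℝ) - 1 - (S.card : ℝ)) * γ S.card := by ring




end PaperFormal
end
end

section
/- Let (X, π) be a weighted n-partite simplicial complex and let I, J ⊆ [n] be disjoint with I ∪ J = [n] and |I| ≥ 2. Fix i ∈ I and let σ = max over x ∈ Ω[{i}] of σ₂(C_x^{(I∖{i})→J}). Then σ₂(C_∅^{I→J})² ≤ 1 − (1 − σ²)·(1 − σ₂(C_∅^{{i}→J})²). -/
open Finset
open scoped Classical

noncomputable section

namespace PaperFormal

variable {n : ℕ} {U : Fin n → Type*} [∀ i, Fintype (U i)] [∀ i, DecidableEq (U i)]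

section Helpers
set_option linter.unusedSectionVars false

variable {n : ℕ} {U : Fin n → Type*} [∀ i, Fintype (U i)] [∀ i, DecidableEq (U i)]

/-- Real-valued indicator of a proposition. -/
def ind (P : Prop) : ℝ := if P then 1 else 0

lemma ind_nonneg (P : Prop) : 0 ≤ ind P := by unfold ind; split <;> norm_num

lemma ind_pos {P : Prop} (h : P) : ind P = 1 := if_pos h

lemma ind_neg {P : Prop} (h : ¬ P) : ind P = 0 := if_neg h

lemma ind_congr {P Q : Prop} (h : P ↔ Q) : ind P = ind Q := by
  unfold ind; exact if_congr h rfl rfl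

lemma ind_and (P Q : Prop) : ind (P ∧ Q) = ind P * ind Q := by
  by_cases hP : P <;> by_cases hQ : Q <;> simp [ind, hP, hQ]

/-- The weight of `ω` in the event pinned at `x`. -/
def wgt (X : WPC n U) {S : Finset (Fin n)} (x : PAssign U S) (ω : ∀ i, U i) : ℝ :=
  X.π ω * ind (restr S ω = x)

lemma wgt_nonneg (X : WPC n U) {S : Finset (Fin n)} (x : PAssign U S) (ω : ∀ i, U i) :
    0 ≤ wgt X x ω := mul_nonneg (X.nonneg ω) (ind_nonneg _)

lemma restr_empty (ω : ∀ i, U i) (α : PAssign U (∅ : Finset (Fin n))) :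
    restr ∅ ω = α := funext fun j => absurd j.2 (Finset.notMem_empty j.1)

lemma pr_eq (X : WPC n U) (E : (∀ i, U i) → Prop) :
    pr X E = ∑ ω : ∀ i, U i, X.π ω * ind (E ω) :=
  Finset.sum_congr rfl fun ω _ => by by_cases h : E ω <;> simp [ind, h]

lemma marg_nonneg (X : WPC n U) (S : Finset (Fin n)) (α : PAssign U S) :
    0 ≤ marg X S α := pr_nonneg X _

lemma pr_pi_zero (X : WPC n U) {E : (∀ i, U i) → Prop} (h : pr X E = 0) :
    ∀ ω, E ω → X.π ω = 0 := by
  intro ω hE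
  rw [pr_eq] at h
  have h0 := (Finset.sum_eq_zero_iff_of_nonneg (fun ω _ =>
    mul_nonneg (X.nonneg ω) (ind_nonneg _))).1 h ω (Finset.mem_univ ω)
  simpa [ind_pos hE] using h0

lemma marg_empty (X : WPC n U) (α : PAssign U (∅ : Finset (Fin n))) : marg X ∅ α = 1 := by
  have : marg X ∅ α = ∑ ω : ∀ i, U i, X.π ω :=
    Finset.sum_congr rfl fun ω _ => if_pos (restr_empty ω α)
  rw [this, X.sum_one]

lemma wcs {A : Type*} [Fintype A] (w u v : A → ℝ) (hw : ∀ a, 0 ≤ w a) :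
    (∑ a, w a * (u a * v a)) ^ 2 ≤ (∑ a, w a * u a ^ 2) * (∑ a, w a * v a ^ 2) := by
  have key := Finset.sum_mul_sq_le_sq_mul_sq Finset.univ
    (fun a => Real.sqrt (w a) * u a) (fun a => Real.sqrt (w a) * v a)
  calc (∑ a, w a * (u a * v a)) ^ 2
      = (∑ a, (Real.sqrt (w a) * u a) * (Real.sqrt (w a) * v a)) ^ 2 := by
        congr 1
        exact Finset.sum_congr rfl fun a _ => by
          rw [mul_mul_mul_comm, Real.mul_self_sqrt (hw a)]
    _ ≤ (∑ a, (Real.sqrt (w a) * u a) ^ 2) * (∑ a, (Real.sqrt (w a) * v a) ^ 2) := key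
    _ = (∑ a, w a * u a ^ 2) * (∑ a, w a * v a ^ 2) := by
        congr 1 <;> exact Finset.sum_congr rfl fun a _ => by
          rw [mul_pow, Real.sq_sqrt (hw a)]

lemma sum_ind_eq {T : Finset (Fin n)} (ω : ∀ i, U i) (c : PAssign U T → ℝ) :
    ∑ τ : PAssign U T, ind (restr T ω = τ) * c τ = c (restr T ω) := by
  rw [Finset.sum_eq_single (restr T ω)]
  · simp [ind]
  · intro b _ hb
    rw [ind_neg (Ne.symm hb), zero_mul]
  · intro h; exact absurd (Finset.mem_univ _) h

lemma sum_collapse {T : Finset (Fin n)} (ν : (∀ i, U i) → ℝ) (P : (∀ i, U i) → Prop)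
    (φ : PAssign U T → ℝ) :
    (∑ τ : PAssign U T, (∑ ω : ∀ i, U i, ν ω * ind (P ω ∧ restr T ω = τ)) * φ τ)
      = ∑ ω : ∀ i, U i, ν ω * ind (P ω) * φ (restr T ω) := by
  simp only [Finset.sum_mul]
  rw [Finset.sum_comm]
  refine Finset.sum_congr rfl fun ω _ => ?_
  calc (∑ τ : PAssign U T, ν ω * ind (P ω ∧ restr T ω = τ) * φ τ)
      = ∑ τ : PAssign U T, (ν ω * ind (P ω)) * (ind (restr T ω = τ) * φ τ) := by
        refine Finset.sum_congr rfl fun τ _ => ?_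
        rw [ind_and]; ring
    _ = (ν ω * ind (P ω)) * ∑ τ : PAssign U T, ind (restr T ω = τ) * φ τ := by
        rw [Finset.mul_sum]
    _ = ν ω * ind (P ω) * φ (restr T ω) := by rw [sum_ind_eq]

lemma sum_cmarg_mul (X : WPC n U) {S T : Finset (Fin n)} (α : PAssign U S)
    (φ : PAssign U T → ℝ) :
    (∑ τ : PAssign U T, cmarg X α τ * φ τ)
      = (∑ ω : ∀ i, U i, wgt X α ω * φ (restr T ω)) / marg X S α := by
  simp only [cmarg, div_mul_eq_mul_div]
  rw [← Finset.sum_div]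
  congr 1
  have hpr : ∀ τ : PAssign U T, pr X (fun ω => restr S ω = α ∧ restr T ω = τ)
      = ∑ ω : ∀ i, U i, X.π ω * ind (restr S ω = α ∧ restr T ω = τ) := fun τ => pr_eq X _
  simp only [hpr]
  exact sum_collapse X.π (fun ω => restr S ω = α) φ

lemma marg_eq_sum_wgt (X : WPC n U) {S : Finset (Fin n)} (x : PAssign U S) :
    marg X S x = ∑ ω : ∀ i, U i, wgt X x ω := pr_eq X _

lemma wgt_mul_comp (X : WPC n U) {S : Finset (Fin n)} (x : PAssign U S)
    (φ : PAssign U S → ℝ) (ω : ∀ i, U i) :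
    wgt X x ω * φ (restr S ω) = wgt X x ω * φ x := by
  by_cases hc : restr S ω = x
  · rw [hc]
  · unfold wgt; rw [ind_neg hc]; ring

lemma wgt_zero (X : WPC n U) {S : Finset (Fin n)} {x : PAssign U S}
    (h : marg X S x = 0) (ω : ∀ i, U i) : wgt X x ω = 0 := by
  rw [marg_eq_sum_wgt] at h
  exact (Finset.sum_eq_zero_iff_of_nonneg (fun ω _ => wgt_nonneg X x ω)).1 h ω
    (Finset.mem_univ ω)

end Helpers
section Helpers2
set_option linter.unusedSectionVars false

variable {n : ℕ} {U : Fin n → Type*} [∀ i, Fintype (U i)] [∀ i, DecidableEq (U i)]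

lemma sum_cmarg_bilin (X : WPC n U) {S I J : Finset (Fin n)} (α : PAssign U S)
    (f : PAssign U I → ℝ) (g : PAssign U J → ℝ) :
    (∑ τI : PAssign U I, cmarg X α τI * f τI *
        ∑ τJ : PAssign U J, Cwalk X S I J α τI τJ * g τJ)
      = (∑ ω : ∀ i, U i, wgt X α ω * (f (restr I ω) * g (restr J ω)))
          / marg X S α := by
  have step : ∀ τI : PAssign U I,
      cmarg X α τI * f τI * (∑ τJ : PAssign U J, Cwalk X S I J α τI τJ * g τJ)
        = ((∑ ω : ∀ i, U i,
            (X.π ω * g (restr J ω)) * ind ((restr S ω = α) ∧ restr I ω = τI)) * f τI)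
            / marg X S α := by
    intro τI
    set d := pr X (fun ω => restr S ω = α ∧ restr I ω = τI) with hd
    -- inner sum
    have hinner : (∑ τJ : PAssign U J, Cwalk X S I J α τI τJ * g τJ)
        = (∑ ω : ∀ i, U i,
            (X.π ω * g (restr J ω)) * ind ((restr S ω = α) ∧ restr I ω = τI)) / d := by
      simp only [Cwalk, div_mul_eq_mul_div]
      rw [← Finset.sum_div]
      congr 1
      have hpr : ∀ τJ : PAssign U J,
          pr X (fun ω => restr S ω = α ∧ restr I ω = τI ∧ restr J ω = τJ)
            = ∑ ω : ∀ i, U i, X.π ω *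
                ind (((restr S ω = α) ∧ restr I ω = τI) ∧ restr J ω = τJ) := by
        intro τJ
        rw [pr_eq]
        exact Finset.sum_congr rfl fun ω _ => by rw [ind_congr (and_assoc)]
      simp only [hpr]
      have := sum_collapse (T := J) X.π
        (fun ω => (restr S ω = α) ∧ restr I ω = τI) g
      rw [this]
      exact Finset.sum_congr rfl fun ω _ => by ring
    rw [hinner]
    simp only [cmarg]
    rw [← hd]
    set N := ∑ ω : ∀ i, U i,
        (X.π ω * g (restr J ω)) * ind ((restr S ω = α) ∧ restr I ω = τI) with hN
    by_cases hd0 : d = 0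
    · have hNz : N = 0 := by
        rw [hN]
        refine Finset.sum_eq_zero fun ω _ => ?_
        by_cases hc : (restr S ω = α) ∧ restr I ω = τI
        · have : X.π ω = 0 := pr_pi_zero X hd0 ω hc
          rw [this]; ring
        · rw [ind_neg hc]; ring
      rw [hd0, hNz]
      simp
    · calc d / marg X S α * f τI * (N / d)
          = f τI * N / marg X S α * (d / d) := by ring
        _ = f τI * N / marg X S α := by rw [div_self hd0, mul_one]
        _ = N * f τI / marg X S α := by ring
  rw [Finset.sum_congr rfl fun τI _ => step τI]
  rw [← Finset.sum_div]
  congr 1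
  have := sum_collapse (T := I) (fun ω => X.π ω * g (restr J ω))
      (fun ω => restr S ω = α) f
  rw [this]
  refine Finset.sum_congr rfl fun ω _ => ?_
  unfold wgt; ring

/-- The defining set of `sigma2C`. -/
def s2set (X : WPC n U) (S I J : Finset (Fin n)) (α : PAssign U S) : Set ℝ :=
  { r : ℝ | ∃ f : PAssign U I → ℝ, ∃ g : PAssign U J → ℝ,
    (∑ a, cmarg X α a * f a) = 0 ∧ (∑ b, cmarg X α b * g b) = 0 ∧
    (∑ a, cmarg X α a * f a ^ 2) = 1 ∧ (∑ b, cmarg X α b * g b ^ 2) = 1 ∧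
    r = ∑ a, cmarg X α a * f a * ∑ b, Cwalk X S I J α a b * g b }

lemma sigma2C_eq (X : WPC n U) (S I J : Finset (Fin n)) (α : PAssign U S) :
    sigma2C X S I J α = sSup (s2set X S I J α) := rfl

lemma s2set_bound (X : WPC n U) {S I J : Finset (Fin n)} {α : PAssign U S} {r : ℝ}
    (hr : r ∈ s2set X S I J α) : |r| ≤ 1 := by
  obtain ⟨f, g, hf0, hg0, hf2, hg2, hrr⟩ := hr
  set m := marg X S α with hm
  have hf2' : (∑ ω : ∀ i, U i, wgt X α ω * f (restr I ω) ^ 2) / m = 1 := by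
    rw [← sum_cmarg_mul X α (fun a => f a ^ 2)]; exact hf2
  have hg2' : (∑ ω : ∀ i, U i, wgt X α ω * g (restr J ω) ^ 2) / m = 1 := by
    rw [← sum_cmarg_mul X α (fun b => g b ^ 2)]; exact hg2
  have hm0 : m ≠ 0 := by
    intro h
    rw [h, div_zero] at hf2'
    exact one_ne_zero hf2'.symm
  have hmpos : 0 < m := lt_of_le_of_ne (marg_nonneg X S α) (Ne.symm hm0)
  have hF2 : (∑ ω : ∀ i, U i, wgt X α ω * f (restr I ω) ^ 2) = m :=
    (div_eq_one_iff_eq hm0).1 hf2'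
  have hG2 : (∑ ω : ∀ i, U i, wgt X α ω * g (restr J ω) ^ 2) = m :=
    (div_eq_one_iff_eq hm0).1 hg2'
  have hrN : r = (∑ ω : ∀ i, U i,
      wgt X α ω * (f (restr I ω) * g (restr J ω))) / m := by
    rw [hrr]; exact sum_cmarg_bilin X α f g
  have hcs := wcs (fun ω => wgt X α ω)
    (fun ω => f (restr I ω)) (fun ω => g (restr J ω))
    (fun ω => wgt_nonneg X α ω)
  rw [hF2, hG2] at hcs
  have h1 : (∑ ω : ∀ i, U i,
      wgt X α ω * (f (restr I ω) * g (restr J ω))) ^ 2 ≤ m ^ 2 := by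
    calc _ ≤ m * m := hcs
      _ = m ^ 2 := by ring
  have habs : |∑ ω : ∀ i, U i,
      wgt X α ω * (f (restr I ω) * g (restr J ω))| ≤ m := by
    rw [← Real.sqrt_sq_eq_abs]
    calc Real.sqrt ((∑ ω : ∀ i, U i,
        wgt X α ω * (f (restr I ω) * g (restr J ω))) ^ 2)
        ≤ Real.sqrt (m ^ 2) := Real.sqrt_le_sqrt h1
      _ = m := Real.sqrt_sq hmpos.le
  rw [hrN, abs_div, abs_of_pos hmpos]
  exact (div_le_one hmpos).2 habs

lemma s2set_neg_mem (X : WPC n U) {S I J : Finset (Fin n)} {α : PAssign U S} {r : ℝ}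
    (hr : r ∈ s2set X S I J α) : -r ∈ s2set X S I J α := by
  obtain ⟨f, g, hf0, hg0, hf2, hg2, hrr⟩ := hr
  refine ⟨fun a => -(f a), g, ?_, hg0, ?_, hg2, ?_⟩
  · simp only [mul_neg, Finset.sum_neg_distrib, hf0, neg_zero]
  · simp only [neg_sq]; exact hf2
  · rw [hrr, ← Finset.sum_neg_distrib]
    exact Finset.sum_congr rfl fun a _ => by ring

lemma s2set_bdd (X : WPC n U) (S I J : Finset (Fin n)) (α : PAssign U S) :
    BddAbove (s2set X S I J α) :=
  ⟨1, fun _ hr => (abs_le.1 (s2set_bound X hr)).2⟩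

lemma sigma2C_le_one (X : WPC n U) (S I J : Finset (Fin n)) (α : PAssign U S) :
    sigma2C X S I J α ≤ 1 := by
  rw [sigma2C_eq]
  exact Real.sSup_le (fun r hr => (abs_le.1 (s2set_bound X hr)).2) one_pos.le

lemma sigma2C_nonneg (X : WPC n U) (S I J : Finset (Fin n)) (α : PAssign U S) :
    0 ≤ sigma2C X S I J α := by
  rw [sigma2C_eq]
  rcases Set.eq_empty_or_nonempty (s2set X S I J α) with h | ⟨r, hr⟩
  · rw [h, Real.sSup_empty]
  · have h1 := le_csSup (s2set_bdd X S I J α) hr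
    have h2 := le_csSup (s2set_bdd X S I J α) (s2set_neg_mem X hr)
    linarith

/-- Joining an assignment on `{i}` with one on `I.erase i` to get one on `I`. -/
def jn {I : Finset (Fin n)} {i : Fin n} (hi : i ∈ I) (x : PAssign U {i})
    (τ : PAssign U (I.erase i)) : PAssign U I :=
  fun k => if hk : k.1 ∈ I.erase i then τ ⟨k.1, hk⟩ else
    x ⟨k.1, by
      have hk2 := k.2
      have : k.1 = i := by
        by_contra hne
        exact hk (Finset.mem_erase.2 ⟨hne, hk2⟩)
      simp [this]⟩

lemma jn_restr {I : Finset (Fin n)} {i : Fin n} (hi : i ∈ I) (ω : ∀ i, U i)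
    (x : PAssign U {i}) (hx : restr {i} ω = x) :
    jn hi x (restr (I.erase i) ω) = restr I ω := by
  funext k
  unfold jn restr
  split
  · rfl
  · rw [← hx]; rfl

lemma sum_cmarg_empty (X : WPC n U) {T : Finset (Fin n)} (α : PAssign U (∅ : Finset (Fin n)))
    (φ : PAssign U T → ℝ) :
    (∑ τ : PAssign U T, cmarg X α τ * φ τ) = ∑ ω : ∀ i, U i, X.π ω * φ (restr T ω) := by
  rw [sum_cmarg_mul, marg_empty, div_one]
  refine Finset.sum_congr rfl fun ω _ => ?_
  unfold wgt
  rw [ind_pos (restr_empty ω α), mul_one]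

lemma sum_bilin_empty (X : WPC n U) {I J : Finset (Fin n)} (α : PAssign U (∅ : Finset (Fin n)))
    (f : PAssign U I → ℝ) (g : PAssign U J → ℝ) :
    (∑ τI : PAssign U I, cmarg X α τI * f τI *
        ∑ τJ : PAssign U J, Cwalk X ∅ I J α τI τJ * g τJ)
      = ∑ ω : ∀ i, U i, X.π ω * (f (restr I ω) * g (restr J ω)) := by
  rw [sum_cmarg_bilin, marg_empty, div_one]
  refine Finset.sum_congr rfl fun ω _ => ?_
  unfold wgt
  rw [ind_pos (restr_empty ω α), mul_one]

lemma sum_wgt_partition (X : WPC n U) (S : Finset (Fin n)) (φ : (∀ i, U i) → ℝ) :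
    (∑ x : PAssign U S, ∑ ω : ∀ i, U i, wgt X x ω * φ ω) = ∑ ω : ∀ i, U i, X.π ω * φ ω := by
  rw [Finset.sum_comm]
  refine Finset.sum_congr rfl fun ω _ => ?_
  calc (∑ x : PAssign U S, wgt X x ω * φ ω)
      = ∑ x : PAssign U S, ind (restr S ω = x) * (X.π ω * φ ω) := by
        refine Finset.sum_congr rfl fun x _ => ?_
        unfold wgt; ring
    _ = X.π ω * φ ω := sum_ind_eq ω _

lemma wgt_mul_comp' (X : WPC n U) {S : Finset (Fin n)} (x : PAssign U S)
    (φ : PAssign U S → ℝ) (c : (∀ i, U i) → ℝ) (ω : ∀ i, U i) :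
    wgt X x ω * (φ (restr S ω) * c ω) = wgt X x ω * (φ x * c ω) := by
  by_cases hc : restr S ω = x
  · rw [hc]
  · unfold wgt; rw [ind_neg hc]; ring

lemma sum_pi_comp (X : WPC n U) (S : Finset (Fin n)) (φ : PAssign U S → ℝ) :
    (∑ ω : ∀ i, U i, X.π ω * φ (restr S ω)) = ∑ x : PAssign U S, marg X S x * φ x := by
  rw [← sum_wgt_partition X S (fun ω => φ (restr S ω))]
  refine Finset.sum_congr rfl fun x _ => ?_
  rw [Finset.sum_congr rfl fun ω _ => wgt_mul_comp X x φ ω, ← Finset.sum_mul, ← marg_eq_sum_wgt]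
section Helpers3
set_option linter.unusedSectionVars false
set_option maxHeartbeats 1000000

variable {n : ℕ} {U : Fin n → Type*} [∀ i, Fintype (U i)] [∀ i, DecidableEq (U i)]

lemma alg_cs2 (A B C D t : ℝ) :
    (A * B + t * (C * D)) ^ 2 ≤ (A ^ 2 + C ^ 2) * (B ^ 2 + t ^ 2 * D ^ 2) := by
  nlinarith [sq_nonneg (A * t * D - C * B)]

lemma alg_mono (b2 s t : ℝ) (h : b2 ≤ s ^ 2) (h0 : 0 ≤ t) (h1 : t ≤ 1) :
    b2 + t ^ 2 * (1 - b2) ≤ 1 - (1 - t ^ 2) * (1 - s ^ 2) := by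
  have ht2 : t ^ 2 ≤ 1 := by nlinarith
  nlinarith [mul_nonneg (sub_nonneg.2 ht2) (sub_nonneg.2 h)]

lemma alg_pos (t s : ℝ) (ht0 : 0 ≤ t) (ht1 : t ≤ 1) (hs0 : 0 ≤ s) (hs1 : s ≤ 1) :
    0 ≤ 1 - (1 - t ^ 2) * (1 - s ^ 2) := by
  have h2 : 0 ≤ 1 - s ^ 2 := by nlinarith
  have h3 : (1 - t ^ 2) * (1 - s ^ 2) ≤ 1 * (1 - s ^ 2) :=
    mul_le_mul_of_nonneg_right (by nlinarith) h2
  nlinarith [h3]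

lemma sum_div_eq {A : Type*} [Fintype A] (F : A → ℝ) (c : ℝ) :
    (∑ a, F a / c) = (∑ a, F a) / c := by
  rw [Finset.sum_div]

/-- If `m` is the conditional mean of `g` given the coordinates in `T`, then the second
moment of `m` is at most `σ₂(C^{T→J})²`. -/
lemma cond_mean_contraction (X : WPC n U) {T J : Finset (Fin n)}
    (α : PAssign U (∅ : Finset (Fin n)))
    (g : PAssign U J → ℝ)
    (hg0 : (∑ b, cmarg X α b * g b) = 0)
    (hg2 : (∑ b, cmarg X α b * g b ^ 2) = 1)
    (m : PAssign U T → ℝ)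
    (hm : ∀ x, marg X T x * m x = ∑ ω : ∀ i, U i, wgt X x ω * g (restr J ω)) :
    (∑ x : PAssign U T, marg X T x * m x ^ 2) ≤ sigma2C X ∅ T J α ^ 2 := by
  set b2 := ∑ x : PAssign U T, marg X T x * m x ^ 2 with hb2def
  have hb2nn : 0 ≤ b2 :=
    Finset.sum_nonneg fun x _ => mul_nonneg (marg_nonneg X T x) (sq_nonneg _)
  rcases eq_or_lt_of_le hb2nn with hb0 | hbpos
  · rw [← hb0]; exact sq_nonneg _
  · set b := Real.sqrt b2 with hbdef
    have hbsq : b ^ 2 = b2 := Real.sq_sqrt hb2nn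
    have hbpos' : 0 < b := Real.sqrt_pos.2 hbpos
    have hbne : b ≠ 0 := ne_of_gt hbpos'
    have hg0' : (∑ ω : ∀ i, U i, X.π ω * g (restr J ω)) = 0 := by
      rw [← sum_cmarg_empty X α g]; exact hg0
    have hsum_pm : (∑ x : PAssign U T, marg X T x * m x) = 0 := by
      rw [Finset.sum_congr rfl fun x _ => hm x, sum_wgt_partition X T _, hg0']
    have hmem : b ∈ s2set X (∅ : Finset (Fin n)) T J α := by
      refine ⟨fun x => m x / b, g, ?_, hg0, ?_, hg2, ?_⟩
      · calc (∑ x : PAssign U T, cmarg X α x * (m x / b))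
            = ∑ ω : ∀ i, U i, X.π ω * (m (restr T ω) / b) :=
              sum_cmarg_empty X α (fun y => m y / b)
          _ = ∑ x : PAssign U T, marg X T x * (m x / b) :=
              sum_pi_comp X T (fun y => m y / b)
          _ = (∑ x : PAssign U T, marg X T x * m x) / b := by
              rw [← sum_div_eq]
              exact Finset.sum_congr rfl fun x _ => by ring
          _ = 0 := by rw [hsum_pm, zero_div]
      · calc (∑ x : PAssign U T, cmarg X α x * (m x / b) ^ 2)
            = ∑ ω : ∀ i, U i, X.π ω * ((m (restr T ω) / b) ^ 2) :=
              sum_cmarg_empty X α (fun y => (m y / b) ^ 2)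
          _ = ∑ x : PAssign U T, marg X T x * (m x / b) ^ 2 :=
              sum_pi_comp X T (fun y => (m y / b) ^ 2)
          _ = (∑ x : PAssign U T, marg X T x * m x ^ 2) / b ^ 2 := by
              rw [← sum_div_eq]
              exact Finset.sum_congr rfl fun x _ => by ring
          _ = 1 := by rw [← hb2def, ← hbsq, div_self (by positivity)]
      · refine Eq.symm ?_
        calc (∑ τI : PAssign U T, cmarg X α τI * (m τI / b) *
                ∑ τJ : PAssign U J, Cwalk X ∅ T J α τI τJ * g τJ)
            = ∑ ω : ∀ i, U i, X.π ω * ((m (restr T ω) / b) * g (restr J ω)) :=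
              sum_bilin_empty X α (fun y => m y / b) g
          _ = ∑ x : PAssign U T, ∑ ω : ∀ i, U i,
                wgt X x ω * ((m (restr T ω) / b) * g (restr J ω)) :=
              (sum_wgt_partition X T _).symm
          _ = ∑ x : PAssign U T, (marg X T x * m x ^ 2) / b := by
              refine Finset.sum_congr rfl fun x _ => ?_
              rw [Finset.sum_congr rfl fun ω _ =>
                wgt_mul_comp' X x (fun y => m y / b) (fun ω => g (restr J ω)) ω]
              have e4 : ∀ ω : ∀ i, U i, wgt X x ω * ((m x / b) * g (restr J ω))
                  = (m x / b) * (wgt X x ω * g (restr J ω)) := fun ω => by ring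
              rw [Finset.sum_congr rfl fun ω _ => e4 ω, ← Finset.mul_sum, ← hm x]
              ring
          _ = b2 / b := by rw [sum_div_eq, ← hb2def]
          _ = b := by rw [← hbsq]; field_simp
    have hle := le_csSup (s2set_bdd X ∅ T J α) hmem
    rw [← sigma2C_eq] at hle
    calc b2 = b ^ 2 := hbsq.symm
      _ ≤ sigma2C X ∅ T J α ^ 2 := by nlinarith [hbpos'.le]

end Helpers3

lemma pinned_cov_bound (X : WPC n U) {I J : Finset (Fin n)} {i : Fin n} (hi : i ∈ I)
    (x : PAssign U {i}) (σ : ℝ) (hσ0 : 0 ≤ σ)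
    (hσx : 0 < marg X {i} x → sigma2C X {i} (I.erase i) J x ≤ σ)
    (f : PAssign U I → ℝ) (g : PAssign U J → ℝ) (H M : ℝ)
    (hH : (∑ ω : ∀ i, U i, wgt X x ω * (f (restr I ω) - H)) = 0)
    (hM : (∑ ω : ∀ i, U i, wgt X x ω * (g (restr J ω) - M)) = 0) :
    (∑ ω : ∀ i, U i, wgt X x ω * ((f (restr I ω) - H) * (g (restr J ω) - M)))
      ≤ σ * (Real.sqrt (∑ ω : ∀ i, U i, wgt X x ω * (f (restr I ω) - H) ^ 2)
           * Real.sqrt (∑ ω : ∀ i, U i, wgt X x ω * (g (restr J ω) - M) ^ 2)) := by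
  have hQF0 : 0 ≤ ∑ ω : ∀ i, U i, wgt X x ω * (f (restr I ω) - H) ^ 2 :=
    Finset.sum_nonneg fun ω _ => mul_nonneg (wgt_nonneg X x ω) (sq_nonneg _)
  have hQG0 : 0 ≤ ∑ ω : ∀ i, U i, wgt X x ω * (g (restr J ω) - M) ^ 2 :=
    Finset.sum_nonneg fun ω _ => mul_nonneg (wgt_nonneg X x ω) (sq_nonneg _)
  have hcs := wcs (wgt X x) (fun ω => f (restr I ω) - H) (fun ω => g (restr J ω) - M)
    (wgt_nonneg X x)
  by_cases hdeg : (∑ ω : ∀ i, U i, wgt X x ω * (f (restr I ω) - H) ^ 2) = 0 ∨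
      (∑ ω : ∀ i, U i, wgt X x ω * (g (restr J ω) - M) ^ 2) = 0
  · have hCV2 : (∑ ω : ∀ i, U i,
        wgt X x ω * ((f (restr I ω) - H) * (g (restr J ω) - M))) ^ 2 ≤ 0 := by
      rcases hdeg with h | h
      · rw [h, zero_mul] at hcs; exact hcs
      · rw [h, mul_zero] at hcs; exact hcs
    have hCV0 : (∑ ω : ∀ i, U i,
        wgt X x ω * ((f (restr I ω) - H) * (g (restr J ω) - M))) = 0 := by
      nlinarith [sq_nonneg (∑ ω : ∀ i, U i,
        wgt X x ω * ((f (restr I ω) - H) * (g (restr J ω) - M)))]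
    rw [hCV0]
    positivity
  · push_neg at hdeg
    have hQFpos : 0 < ∑ ω : ∀ i, U i, wgt X x ω * (f (restr I ω) - H) ^ 2 :=
      lt_of_le_of_ne hQF0 (Ne.symm hdeg.1)
    have hQGpos : 0 < ∑ ω : ∀ i, U i, wgt X x ω * (g (restr J ω) - M) ^ 2 :=
      lt_of_le_of_ne hQG0 (Ne.symm hdeg.2)
    have hppos : 0 < marg X {i} x := by
      rcases eq_or_lt_of_le (marg_nonneg X {i} x) with h0 | h
      · exfalso
        apply hdeg.1
        exact Finset.sum_eq_zero fun ω _ => by rw [wgt_zero X h0.symm ω, zero_mul]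
      · exact h
    have hpne : marg X {i} x ≠ 0 := ne_of_gt hppos
    set QF := ∑ ω : ∀ i, U i, wgt X x ω * (f (restr I ω) - H) ^ 2 with hQFdef
    set QG := ∑ ω : ∀ i, U i, wgt X x ω * (g (restr J ω) - M) ^ 2 with hQGdef
    set CV := ∑ ω : ∀ i, U i,
      wgt X x ω * ((f (restr I ω) - H) * (g (restr J ω) - M)) with hCVdef
    set c1 := Real.sqrt (QF / marg X {i} x) with hc1def
    set c2 := Real.sqrt (QG / marg X {i} x) with hc2def
    have hc1pos : 0 < c1 := Real.sqrt_pos.2 (div_pos hQFpos hppos)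
    have hc2pos : 0 < c2 := Real.sqrt_pos.2 (div_pos hQGpos hppos)
    have hc1sq : c1 ^ 2 = QF / marg X {i} x := Real.sq_sqrt (div_pos hQFpos hppos).le
    have hc2sq : c2 ^ 2 = QG / marg X {i} x := Real.sq_sqrt (div_pos hQGpos hppos).le
    -- composition: replacing f∘jn by f∘restr on the support
    have ecomp : ∀ (c : ℝ) (ω : ∀ i, U i),
        wgt X x ω * ((f (jn hi x (restr (I.erase i) ω)) - H) / c1 *
          ((g (restr J ω) - M) / c2 * c))
        = wgt X x ω * ((f (restr I ω) - H) / c1 * ((g (restr J ω) - M) / c2 * c)) := by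
      intro c ω
      by_cases hc : restr {i} ω = x
      · rw [jn_restr hi ω x hc]
      · unfold wgt; rw [ind_neg hc]; ring
    have ecomp1 : ∀ (φ : ℝ → ℝ) (ω : ∀ i, U i),
        wgt X x ω * φ (f (jn hi x (restr (I.erase i) ω)))
          = wgt X x ω * φ (f (restr I ω)) := by
      intro φ ω
      by_cases hc : restr {i} ω = x
      · rw [jn_restr hi ω x hc]
      · unfold wgt; rw [ind_neg hc]; ring
    have hmem : CV / (c1 * c2 * marg X {i} x) ∈ s2set X {i} (I.erase i) J x := by
      refine ⟨fun τ => (f (jn hi x τ) - H) / c1, fun τJ => (g τJ - M) / c2,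
        ?_, ?_, ?_, ?_, ?_⟩
      · calc (∑ τ : PAssign U (I.erase i), cmarg X x τ * ((f (jn hi x τ) - H) / c1))
            = (∑ ω : ∀ i, U i, wgt X x ω *
                ((f (jn hi x (restr (I.erase i) ω)) - H) / c1)) / marg X {i} x :=
              sum_cmarg_mul X x (fun τ => (f (jn hi x τ) - H) / c1)
          _ = (∑ ω : ∀ i, U i, wgt X x ω * ((f (restr I ω) - H) / c1)) / marg X {i} x := by
              congr 1
              exact Finset.sum_congr rfl fun ω _ => ecomp1 (fun y => (y - H) / c1) ω
          _ = ((∑ ω : ∀ i, U i, wgt X x ω * (f (restr I ω) - H)) / c1) / marg X {i} x := by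
              congr 1
              rw [← sum_div_eq]
              exact Finset.sum_congr rfl fun ω _ => by ring
          _ = 0 := by rw [hH, zero_div, zero_div]
      · calc (∑ τJ : PAssign U J, cmarg X x τJ * ((g τJ - M) / c2))
            = (∑ ω : ∀ i, U i, wgt X x ω *
                ((g (restr J ω) - M) / c2)) / marg X {i} x :=
              sum_cmarg_mul X x (fun τJ => (g τJ - M) / c2)
          _ = ((∑ ω : ∀ i, U i, wgt X x ω * (g (restr J ω) - M)) / c2) / marg X {i} x := by
              congr 1
              rw [← sum_div_eq]
              exact Finset.sum_congr rfl fun ω _ => by ring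
          _ = 0 := by rw [hM, zero_div, zero_div]
      · calc (∑ τ : PAssign U (I.erase i), cmarg X x τ * ((f (jn hi x τ) - H) / c1) ^ 2)
            = (∑ ω : ∀ i, U i, wgt X x ω *
                ((f (jn hi x (restr (I.erase i) ω)) - H) / c1) ^ 2) / marg X {i} x :=
              sum_cmarg_mul X x (fun τ => ((f (jn hi x τ) - H) / c1) ^ 2)
          _ = (∑ ω : ∀ i, U i, wgt X x ω *
                ((f (restr I ω) - H) / c1) ^ 2) / marg X {i} x := by
              congr 1
              exact Finset.sum_congr rfl fun ω _ => ecomp1 (fun y => ((y - H) / c1) ^ 2) ω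
          _ = ((∑ ω : ∀ i, U i, wgt X x ω * (f (restr I ω) - H) ^ 2) / c1 ^ 2)
                / marg X {i} x := by
              congr 1
              rw [← sum_div_eq]
              exact Finset.sum_congr rfl fun ω _ => by ring
          _ = 1 := by
              rw [← hQFdef, hc1sq]
              field_simp
      · calc (∑ τJ : PAssign U J, cmarg X x τJ * ((g τJ - M) / c2) ^ 2)
            = (∑ ω : ∀ i, U i, wgt X x ω *
                ((g (restr J ω) - M) / c2) ^ 2) / marg X {i} x :=
              sum_cmarg_mul X x (fun τJ => ((g τJ - M) / c2) ^ 2)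
          _ = ((∑ ω : ∀ i, U i, wgt X x ω * (g (restr J ω) - M) ^ 2) / c2 ^ 2)
                / marg X {i} x := by
              congr 1
              rw [← sum_div_eq]
              exact Finset.sum_congr rfl fun ω _ => by ring
          _ = 1 := by
              rw [← hQGdef, hc2sq]
              field_simp
      · refine Eq.symm ?_
        calc (∑ τ : PAssign U (I.erase i), cmarg X x τ * ((f (jn hi x τ) - H) / c1) *
                ∑ τJ : PAssign U J, Cwalk X {i} (I.erase i) J x τ τJ * ((g τJ - M) / c2))
            = (∑ ω : ∀ i, U i, wgt X x ω *
                ((f (jn hi x (restr (I.erase i) ω)) - H) / c1 *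
                  ((g (restr J ω) - M) / c2))) / marg X {i} x :=
              sum_cmarg_bilin X x (fun τ => (f (jn hi x τ) - H) / c1)
                (fun τJ => (g τJ - M) / c2)
          _ = (∑ ω : ∀ i, U i, wgt X x ω *
                ((f (restr I ω) - H) / c1 * ((g (restr J ω) - M) / c2))) / marg X {i} x := by
              congr 1
              refine Finset.sum_congr rfl fun ω _ => ?_
              have := ecomp 1 ω
              simpa using this
          _ = ((∑ ω : ∀ i, U i, wgt X x ω *
                ((f (restr I ω) - H) * (g (restr J ω) - M))) / (c1 * c2)) / marg X {i} x := by
              congr 1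
              rw [← sum_div_eq]
              exact Finset.sum_congr rfl fun ω _ => by ring
          _ = CV / (c1 * c2 * marg X {i} x) := by
              rw [← hCVdef, div_div]
    have hle := le_csSup (s2set_bdd X {i} (I.erase i) J x) hmem
    rw [← sigma2C_eq] at hle
    have hval : CV / (c1 * c2 * marg X {i} x) ≤ σ := le_trans hle (hσx hppos)
    have hcc : c1 * c2 * marg X {i} x = Real.sqrt QF * Real.sqrt QG := by
      rw [hc1def, hc2def, ← Real.sqrt_mul (div_pos hQFpos hppos).le]
      have e : QF / marg X {i} x * (QG / marg X {i} x) = QF * QG / (marg X {i} x) ^ 2 := by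
        field_simp
      rw [e, Real.sqrt_div (mul_nonneg hQF0 hQG0), Real.sqrt_sq hppos.le,
        div_mul_cancel₀ _ hpne, Real.sqrt_mul hQF0]
    have hdne : c1 * c2 * marg X {i} x ≠ 0 := by positivity
    calc CV = CV / (c1 * c2 * marg X {i} x) * (c1 * c2 * marg X {i} x) :=
          (div_mul_cancel₀ CV hdne).symm
      _ ≤ σ * (c1 * c2 * marg X {i} x) := by
          refine mul_le_mul_of_nonneg_right hval ?_
          positivity
      _ = σ * (Real.sqrt QF * Real.sqrt QG) := by rw [hcc]

end Helpers2
set_option maxHeartbeats 2000000 in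
theorem sigma2C_recursion
    (X : WPC n U) (I J : Finset (Fin n)) (hIJ : Disjoint I J)
    (hUnion : I ∪ J = Finset.univ) (hI : 2 ≤ I.card) (i : Fin n) (hi : i ∈ I)
    (σ : ℝ)
    (hσ : σ = sSup { r : ℝ | ∃ x : PAssign U {i}, 0 < marg X {i} x ∧
      r = sigma2C X {i} (I.erase i) J x })
    (α : PAssign U (∅ : Finset (Fin n))) :
    sigma2C X ∅ I J α ^ 2 ≤ 1 - (1 - σ ^ 2) * (1 - sigma2C X ∅ {i} J α ^ 2) := by
  have hs0 : 0 ≤ sigma2C X ∅ {i} J α := sigma2C_nonneg X ∅ {i} J α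
  have hs1 : sigma2C X ∅ {i} J α ≤ 1 := sigma2C_le_one X ∅ {i} J α
  set s := sigma2C X ∅ {i} J α with hsdef
  have hσ0 : 0 ≤ σ := by
    rw [hσ]
    apply Real.sSup_nonneg
    rintro r ⟨x, hx, rfl⟩
    exact sigma2C_nonneg X {i} (I.erase i) J x
  have hσ1 : σ ≤ 1 := by
    rw [hσ]
    refine Real.sSup_le ?_ one_pos.le
    rintro r ⟨x, hx, rfl⟩
    exact sigma2C_le_one X {i} (I.erase i) J x
  have hσx : ∀ x : PAssign U {i}, 0 < marg X {i} x →
      sigma2C X {i} (I.erase i) J x ≤ σ := by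
    intro x hx
    rw [hσ]
    exact le_csSup ⟨1, by rintro r ⟨y, hy, rfl⟩; exact sigma2C_le_one X {i} (I.erase i) J y⟩
      ⟨x, hx, rfl⟩
  have hRHS0 : 0 ≤ 1 - (1 - σ ^ 2) * (1 - s ^ 2) := alg_pos σ s hσ0 hσ1 hs0 hs1
  have hB2 : Real.sqrt (1 - (1 - σ ^ 2) * (1 - s ^ 2)) ^ 2
      = 1 - (1 - σ ^ 2) * (1 - s ^ 2) := Real.sq_sqrt hRHS0
  have key : ∀ r ∈ s2set X (∅ : Finset (Fin n)) I J α,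
      r ≤ Real.sqrt (1 - (1 - σ ^ 2) * (1 - s ^ 2)) := by
    rintro r ⟨f, g, hf0, hg0, hf2, hg2, hrr⟩
    have hf2' : (∑ ω : ∀ i, U i, X.π ω * f (restr I ω) ^ 2) = 1 :=
      (sum_cmarg_empty X α (fun a => f a ^ 2)).symm.trans hf2
    have hrr' : r = ∑ ω : ∀ i, U i, X.π ω * (f (restr I ω) * g (restr J ω)) :=
      hrr.trans (sum_bilin_empty X α f g)
    obtain ⟨hh, hh_def⟩ : ∃ hh : PAssign U {i} → ℝ, ∀ x, hh x
        = (∑ ω : ∀ i, U i, wgt X x ω * f (restr I ω)) / marg X {i} x := ⟨_, fun _ => rfl⟩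
    obtain ⟨mm, mm_def⟩ : ∃ mm : PAssign U {i} → ℝ, ∀ x, mm x
        = (∑ ω : ∀ i, U i, wgt X x ω * g (restr J ω)) / marg X {i} x := ⟨_, fun _ => rfl⟩
    have hcancel : ∀ (mv N : ℝ), (mv = 0 → N = 0) → mv * (N / mv) = N := by
      intro mv N hz
      by_cases h : mv = 0
      · rw [h, zero_mul, hz h]
      · rw [mul_comm, div_mul_cancel₀ _ h]
    have hNf : ∀ x : PAssign U {i}, marg X {i} x * hh x
        = ∑ ω : ∀ i, U i, wgt X x ω * f (restr I ω) := by
      intro x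
      rw [hh_def x]
      refine hcancel _ _ fun h0 => ?_
      exact Finset.sum_eq_zero fun ω _ => by rw [wgt_zero X h0 ω, zero_mul]
    have hNg : ∀ x : PAssign U {i}, marg X {i} x * mm x
        = ∑ ω : ∀ i, U i, wgt X x ω * g (restr J ω) := by
      intro x
      rw [mm_def x]
      refine hcancel _ _ fun h0 => ?_
      exact Finset.sum_eq_zero fun ω _ => by rw [wgt_zero X h0 ω, zero_mul]
    have hHzero : ∀ x : PAssign U {i},
        (∑ ω : ∀ i, U i, wgt X x ω * (f (restr I ω) - hh x)) = 0 := by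
      intro x
      have e : ∀ ω : ∀ i, U i, wgt X x ω * (f (restr I ω) - hh x)
          = wgt X x ω * f (restr I ω) - hh x * wgt X x ω := fun ω => by ring
      have e2 : (∑ ω : ∀ i, U i, wgt X x ω * (f (restr I ω) - hh x))
          = (∑ ω : ∀ i, U i, wgt X x ω * f (restr I ω))
            - hh x * (∑ ω : ∀ i, U i, wgt X x ω) := by
        rw [Finset.sum_congr rfl fun ω _ => e ω, Finset.sum_sub_distrib, Finset.mul_sum]
      rw [e2, ← marg_eq_sum_wgt, ← hNf x]
      ring
    have hMzero : ∀ x : PAssign U {i},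
        (∑ ω : ∀ i, U i, wgt X x ω * (g (restr J ω) - mm x)) = 0 := by
      intro x
      have e : ∀ ω : ∀ i, U i, wgt X x ω * (g (restr J ω) - mm x)
          = wgt X x ω * g (restr J ω) - mm x * wgt X x ω := fun ω => by ring
      have e2 : (∑ ω : ∀ i, U i, wgt X x ω * (g (restr J ω) - mm x))
          = (∑ ω : ∀ i, U i, wgt X x ω * g (restr J ω))
            - mm x * (∑ ω : ∀ i, U i, wgt X x ω) := by
        rw [Finset.sum_congr rfl fun ω _ => e ω, Finset.sum_sub_distrib, Finset.mul_sum]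
      rw [e2, ← marg_eq_sum_wgt, ← hNg x]
      ring
    have covdec : ∀ x : PAssign U {i},
        (∑ ω : ∀ i, U i, wgt X x ω * (f (restr I ω) * g (restr J ω)))
          = (∑ ω : ∀ i, U i,
              wgt X x ω * ((f (restr I ω) - hh x) * (g (restr J ω) - mm x)))
            + marg X {i} x * (hh x * mm x) := by
      intro x
      have e : ∀ ω : ∀ i, U i,
          wgt X x ω * ((f (restr I ω) - hh x) * (g (restr J ω) - mm x))
            = wgt X x ω * (f (restr I ω) * g (restr J ω))
              - hh x * (wgt X x ω * g (restr J ω)) - mm x * (wgt X x ω * f (restr I ω))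
              + hh x * mm x * wgt X x ω := fun ω => by ring
      have e2 : (∑ ω : ∀ i, U i,
          wgt X x ω * ((f (restr I ω) - hh x) * (g (restr J ω) - mm x)))
            = (∑ ω : ∀ i, U i, wgt X x ω * (f (restr I ω) * g (restr J ω)))
              - hh x * (∑ ω : ∀ i, U i, wgt X x ω * g (restr J ω))
              - mm x * (∑ ω : ∀ i, U i, wgt X x ω * f (restr I ω))
              + hh x * mm x * (∑ ω : ∀ i, U i, wgt X x ω) := by
        rw [Finset.sum_congr rfl fun ω _ => e ω]
        simp only [Finset.sum_add_distrib, Finset.sum_sub_distrib, Finset.mul_sum]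
      rw [e2, ← hNf x, ← hNg x, ← marg_eq_sum_wgt]
      ring
    have qfdec : ∀ x : PAssign U {i},
        (∑ ω : ∀ i, U i, wgt X x ω * (f (restr I ω) - hh x) ^ 2)
          = (∑ ω : ∀ i, U i, wgt X x ω * f (restr I ω) ^ 2)
            - marg X {i} x * hh x ^ 2 := by
      intro x
      have e : ∀ ω : ∀ i, U i, wgt X x ω * (f (restr I ω) - hh x) ^ 2
          = wgt X x ω * f (restr I ω) ^ 2 - 2 * hh x * (wgt X x ω * f (restr I ω))
            + hh x ^ 2 * wgt X x ω := fun ω => by ring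
      have e2 : (∑ ω : ∀ i, U i, wgt X x ω * (f (restr I ω) - hh x) ^ 2)
          = (∑ ω : ∀ i, U i, wgt X x ω * f (restr I ω) ^ 2)
            - 2 * hh x * (∑ ω : ∀ i, U i, wgt X x ω * f (restr I ω))
            + hh x ^ 2 * (∑ ω : ∀ i, U i, wgt X x ω) := by
        rw [Finset.sum_congr rfl fun ω _ => e ω]
        simp only [Finset.sum_add_distrib, Finset.sum_sub_distrib, Finset.mul_sum]
      rw [e2, ← hNf x, ← marg_eq_sum_wgt]
      ring
    have qgdec : ∀ x : PAssign U {i},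
        (∑ ω : ∀ i, U i, wgt X x ω * (g (restr J ω) - mm x) ^ 2)
          = (∑ ω : ∀ i, U i, wgt X x ω * g (restr J ω) ^ 2)
            - marg X {i} x * mm x ^ 2 := by
      intro x
      have e : ∀ ω : ∀ i, U i, wgt X x ω * (g (restr J ω) - mm x) ^ 2
          = wgt X x ω * g (restr J ω) ^ 2 - 2 * mm x * (wgt X x ω * g (restr J ω))
            + mm x ^ 2 * wgt X x ω := fun ω => by ring
      have e2 : (∑ ω : ∀ i, U i, wgt X x ω * (g (restr J ω) - mm x) ^ 2)
          = (∑ ω : ∀ i, U i, wgt X x ω * g (restr J ω) ^ 2)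
            - 2 * mm x * (∑ ω : ∀ i, U i, wgt X x ω * g (restr J ω))
            + mm x ^ 2 * (∑ ω : ∀ i, U i, wgt X x ω) := by
        rw [Finset.sum_congr rfl fun ω _ => e ω]
        simp only [Finset.sum_add_distrib, Finset.sum_sub_distrib, Finset.mul_sum]
      rw [e2, ← hNg x, ← marg_eq_sum_wgt]
      ring
    have hsum_f2 : (∑ x : PAssign U {i},
        ∑ ω : ∀ i, U i, wgt X x ω * f (restr I ω) ^ 2) = 1 :=
      (sum_wgt_partition X {i} (fun ω => f (restr I ω) ^ 2)).trans hf2'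
    have hg2' : (∑ ω : ∀ i, U i, X.π ω * g (restr J ω) ^ 2) = 1 :=
      (sum_cmarg_empty X α (fun b => g b ^ 2)).symm.trans hg2
    have hsum_g2 : (∑ x : PAssign U {i},
        ∑ ω : ∀ i, U i, wgt X x ω * g (restr J ω) ^ 2) = 1 :=
      (sum_wgt_partition X {i} (fun ω => g (restr J ω) ^ 2)).trans hg2'
    set a2 := ∑ x : PAssign U {i}, marg X {i} x * hh x ^ 2 with ha2def
    set b2 := ∑ x : PAssign U {i}, marg X {i} x * mm x ^ 2 with hb2def
    have ha2nn : 0 ≤ a2 := Finset.sum_nonneg fun x _ =>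
      mul_nonneg (marg_nonneg X {i} x) (sq_nonneg _)
    have hb2nn : 0 ≤ b2 := Finset.sum_nonneg fun x _ =>
      mul_nonneg (marg_nonneg X {i} x) (sq_nonneg _)
    have hQfsum : (∑ x : PAssign U {i},
        ∑ ω : ∀ i, U i, wgt X x ω * (f (restr I ω) - hh x) ^ 2) = 1 - a2 := by
      rw [Finset.sum_congr rfl fun x _ => qfdec x, Finset.sum_sub_distrib, hsum_f2, ha2def]
    have hQgsum : (∑ x : PAssign U {i},
        ∑ ω : ∀ i, U i, wgt X x ω * (g (restr J ω) - mm x) ^ 2) = 1 - b2 := by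
      rw [Finset.sum_congr rfl fun x _ => qgdec x, Finset.sum_sub_distrib, hsum_g2, hb2def]
    have hQfnn : ∀ x : PAssign U {i},
        0 ≤ ∑ ω : ∀ i, U i, wgt X x ω * (f (restr I ω) - hh x) ^ 2 := fun x =>
      Finset.sum_nonneg fun ω _ => mul_nonneg (wgt_nonneg X x ω) (sq_nonneg _)
    have hQgnn : ∀ x : PAssign U {i},
        0 ≤ ∑ ω : ∀ i, U i, wgt X x ω * (g (restr J ω) - mm x) ^ 2 := fun x =>
      Finset.sum_nonneg fun ω _ => mul_nonneg (wgt_nonneg X x ω) (sq_nonneg _)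
    have h1a2 : 0 ≤ 1 - a2 := by
      rw [← hQfsum]; exact Finset.sum_nonneg fun x _ => hQfnn x
    have h1b2 : 0 ≤ 1 - b2 := by
      rw [← hQgsum]; exact Finset.sum_nonneg fun x _ => hQgnn x
    have hb2s : b2 ≤ s ^ 2 := by
      have h := cond_mean_contraction X α g hg0 hg2 mm hNg
      rw [← hsdef] at h
      rw [hb2def]
      exact h
    have keyx : ∀ x : PAssign U {i},
        (∑ ω : ∀ i, U i, wgt X x ω * ((f (restr I ω) - hh x) * (g (restr J ω) - mm x)))
          ≤ σ * (Real.sqrt (∑ ω : ∀ i, U i, wgt X x ω * (f (restr I ω) - hh x) ^ 2)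
               * Real.sqrt (∑ ω : ∀ i, U i, wgt X x ω * (g (restr J ω) - mm x) ^ 2)) :=
      fun x => pinned_cov_bound X hi x σ hσ0 (hσx x) f g (hh x) (mm x) (hHzero x) (hMzero x)
    have hr_split : r = (∑ x : PAssign U {i},
        ∑ ω : ∀ i, U i, wgt X x ω * ((f (restr I ω) - hh x) * (g (restr J ω) - mm x)))
          + ∑ x : PAssign U {i}, marg X {i} x * (hh x * mm x) := by
      rw [hrr', ← sum_wgt_partition X {i} (fun ω => f (restr I ω) * g (restr J ω)),
        Finset.sum_congr rfl fun x _ => covdec x, Finset.sum_add_distrib]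
    have hmean : (∑ x : PAssign U {i}, marg X {i} x * (hh x * mm x))
        ≤ Real.sqrt a2 * Real.sqrt b2 := by
      have h1 := wcs (fun x : PAssign U {i} => marg X {i} x) hh mm
        (fun x => marg_nonneg X {i} x)
      calc (∑ x : PAssign U {i}, marg X {i} x * (hh x * mm x))
          ≤ |∑ x : PAssign U {i}, marg X {i} x * (hh x * mm x)| := le_abs_self _
        _ = Real.sqrt ((∑ x : PAssign U {i}, marg X {i} x * (hh x * mm x)) ^ 2) :=
            (Real.sqrt_sq_eq_abs _).symm
        _ ≤ Real.sqrt (a2 * b2) := Real.sqrt_le_sqrt (by rw [ha2def, hb2def]; exact h1)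
        _ = Real.sqrt a2 * Real.sqrt b2 := Real.sqrt_mul ha2nn _
    have hcov : (∑ x : PAssign U {i},
        ∑ ω : ∀ i, U i, wgt X x ω * ((f (restr I ω) - hh x) * (g (restr J ω) - mm x)))
          ≤ σ * (Real.sqrt (1 - a2) * Real.sqrt (1 - b2)) := by
      have hsqs : (∑ x : PAssign U {i},
          Real.sqrt (∑ ω : ∀ i, U i, wgt X x ω * (f (restr I ω) - hh x) ^ 2)
            * Real.sqrt (∑ ω : ∀ i, U i, wgt X x ω * (g (restr J ω) - mm x) ^ 2))
          ≤ Real.sqrt (1 - a2) * Real.sqrt (1 - b2) := by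
        have hws := wcs (fun _ : PAssign U {i} => (1 : ℝ))
          (fun x => Real.sqrt (∑ ω : ∀ i, U i, wgt X x ω * (f (restr I ω) - hh x) ^ 2))
          (fun x => Real.sqrt (∑ ω : ∀ i, U i, wgt X x ω * (g (restr J ω) - mm x) ^ 2))
          (fun _ => zero_le_one)
        simp only [one_mul] at hws
        have hws2 : (∑ x : PAssign U {i},
            Real.sqrt (∑ ω : ∀ i, U i, wgt X x ω * (f (restr I ω) - hh x) ^ 2)
              * Real.sqrt (∑ ω : ∀ i, U i, wgt X x ω * (g (restr J ω) - mm x) ^ 2)) ^ 2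
            ≤ (1 - a2) * (1 - b2) := by
          calc _ ≤ (∑ x : PAssign U {i},
              Real.sqrt (∑ ω : ∀ i, U i, wgt X x ω * (f (restr I ω) - hh x) ^ 2) ^ 2)
              * (∑ x : PAssign U {i},
              Real.sqrt (∑ ω : ∀ i, U i, wgt X x ω * (g (restr J ω) - mm x) ^ 2) ^ 2) := hws
            _ = (1 - a2) * (1 - b2) := by
                rw [Finset.sum_congr rfl fun x _ => Real.sq_sqrt (hQfnn x),
                  Finset.sum_congr rfl fun x _ => Real.sq_sqrt (hQgnn x), hQfsum, hQgsum]
        have hnn : 0 ≤ ∑ x : PAssign U {i},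
            Real.sqrt (∑ ω : ∀ i, U i, wgt X x ω * (f (restr I ω) - hh x) ^ 2)
              * Real.sqrt (∑ ω : ∀ i, U i, wgt X x ω * (g (restr J ω) - mm x) ^ 2) :=
          Finset.sum_nonneg fun x _ => mul_nonneg (Real.sqrt_nonneg _) (Real.sqrt_nonneg _)
        calc (∑ x : PAssign U {i},
            Real.sqrt (∑ ω : ∀ i, U i, wgt X x ω * (f (restr I ω) - hh x) ^ 2)
              * Real.sqrt (∑ ω : ∀ i, U i, wgt X x ω * (g (restr J ω) - mm x) ^ 2))
            = Real.sqrt ((∑ x : PAssign U {i},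
              Real.sqrt (∑ ω : ∀ i, U i, wgt X x ω * (f (restr I ω) - hh x) ^ 2)
                * Real.sqrt (∑ ω : ∀ i, U i, wgt X x ω * (g (restr J ω) - mm x) ^ 2)) ^ 2) :=
              (Real.sqrt_sq hnn).symm
          _ ≤ Real.sqrt ((1 - a2) * (1 - b2)) := Real.sqrt_le_sqrt hws2
          _ = Real.sqrt (1 - a2) * Real.sqrt (1 - b2) := Real.sqrt_mul h1a2 _
      calc (∑ x : PAssign U {i},
          ∑ ω : ∀ i, U i, wgt X x ω * ((f (restr I ω) - hh x) * (g (restr J ω) - mm x)))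
          ≤ ∑ x : PAssign U {i},
            σ * (Real.sqrt (∑ ω : ∀ i, U i, wgt X x ω * (f (restr I ω) - hh x) ^ 2)
              * Real.sqrt (∑ ω : ∀ i, U i, wgt X x ω * (g (restr J ω) - mm x) ^ 2)) :=
            Finset.sum_le_sum fun x _ => keyx x
        _ = σ * ∑ x : PAssign U {i},
            Real.sqrt (∑ ω : ∀ i, U i, wgt X x ω * (f (restr I ω) - hh x) ^ 2)
              * Real.sqrt (∑ ω : ∀ i, U i, wgt X x ω * (g (restr J ω) - mm x) ^ 2) := by
            rw [Finset.mul_sum]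
        _ ≤ σ * (Real.sqrt (1 - a2) * Real.sqrt (1 - b2)) :=
            mul_le_mul_of_nonneg_left hsqs hσ0
    -- final algebra
    have hr_le : r ≤ Real.sqrt a2 * Real.sqrt b2
        + σ * (Real.sqrt (1 - a2) * Real.sqrt (1 - b2)) := by
      calc r = _ := hr_split
        _ ≤ σ * (Real.sqrt (1 - a2) * Real.sqrt (1 - b2))
            + Real.sqrt a2 * Real.sqrt b2 := add_le_add hcov hmean
        _ = Real.sqrt a2 * Real.sqrt b2
            + σ * (Real.sqrt (1 - a2) * Real.sqrt (1 - b2)) := add_comm _ _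
    have hA2 : Real.sqrt a2 ^ 2 = a2 := Real.sq_sqrt ha2nn
    have hBb2 : Real.sqrt b2 ^ 2 = b2 := Real.sq_sqrt hb2nn
    have hC2 : Real.sqrt (1 - a2) ^ 2 = 1 - a2 := Real.sq_sqrt h1a2
    have hD2 : Real.sqrt (1 - b2) ^ 2 = 1 - b2 := Real.sq_sqrt h1b2
    have hTnn : 0 ≤ Real.sqrt a2 * Real.sqrt b2
        + σ * (Real.sqrt (1 - a2) * Real.sqrt (1 - b2)) := by positivity
    have h4 : (Real.sqrt a2 * Real.sqrt b2
        + σ * (Real.sqrt (1 - a2) * Real.sqrt (1 - b2))) ^ 2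
        ≤ (Real.sqrt a2 ^ 2 + Real.sqrt (1 - a2) ^ 2)
          * (Real.sqrt b2 ^ 2 + σ ^ 2 * Real.sqrt (1 - b2) ^ 2) :=
      alg_cs2 (Real.sqrt a2) (Real.sqrt b2) (Real.sqrt (1 - a2)) (Real.sqrt (1 - b2)) σ
    have h5 : Real.sqrt a2 ^ 2 + Real.sqrt (1 - a2) ^ 2 = 1 := by
      rw [hA2, hC2]; ring
    have h6 : Real.sqrt b2 ^ 2 + σ ^ 2 * Real.sqrt (1 - b2) ^ 2
        ≤ 1 - (1 - σ ^ 2) * (1 - s ^ 2) := by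
      rw [hBb2, hD2]
      exact alg_mono b2 s σ hb2s hσ0 hσ1
    have hTsq : (Real.sqrt a2 * Real.sqrt b2
        + σ * (Real.sqrt (1 - a2) * Real.sqrt (1 - b2))) ^ 2
        ≤ 1 - (1 - σ ^ 2) * (1 - s ^ 2) := by
      calc _ ≤ (Real.sqrt a2 ^ 2 + Real.sqrt (1 - a2) ^ 2)
            * (Real.sqrt b2 ^ 2 + σ ^ 2 * Real.sqrt (1 - b2) ^ 2) := h4
        _ = Real.sqrt b2 ^ 2 + σ ^ 2 * Real.sqrt (1 - b2) ^ 2 := by rw [h5, one_mul]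
        _ ≤ 1 - (1 - σ ^ 2) * (1 - s ^ 2) := h6
    calc r ≤ Real.sqrt a2 * Real.sqrt b2
          + σ * (Real.sqrt (1 - a2) * Real.sqrt (1 - b2)) := hr_le
      _ = Real.sqrt ((Real.sqrt a2 * Real.sqrt b2
          + σ * (Real.sqrt (1 - a2) * Real.sqrt (1 - b2))) ^ 2) := (Real.sqrt_sq hTnn).symm
      _ ≤ Real.sqrt (1 - (1 - σ ^ 2) * (1 - s ^ 2)) := Real.sqrt_le_sqrt hTsq
  -- conclude
  rw [sigma2C_eq X ∅ I J α]
  have h1 : sSup (s2set X (∅ : Finset (Fin n)) I J α)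
      ≤ Real.sqrt (1 - (1 - σ ^ 2) * (1 - s ^ 2)) :=
    Real.sSup_le key (Real.sqrt_nonneg _)
  have h2 : -Real.sqrt (1 - (1 - σ ^ 2) * (1 - s ^ 2))
      ≤ sSup (s2set X (∅ : Finset (Fin n)) I J α) := by
    rcases Set.eq_empty_or_nonempty (s2set X (∅ : Finset (Fin n)) I J α) with hemp | ⟨r0, hr0⟩
    · rw [hemp, Real.sSup_empty]
      exact neg_nonpos_of_nonneg (Real.sqrt_nonneg _)
    · have hneg := key _ (s2set_neg_mem X hr0)
      have hle := le_csSup (s2set_bdd X ∅ I J α) hr0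
      linarith
  calc sSup (s2set X (∅ : Finset (Fin n)) I J α) ^ 2
      ≤ Real.sqrt (1 - (1 - σ ^ 2) * (1 - s ^ 2)) ^ 2 := sq_le_sq' h2 h1
    _ = 1 - (1 - σ ^ 2) * (1 - s ^ 2) := hB2

end PaperFormal
end
end
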